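/- arXiv:1903.04372 — 4 statements merged into one kernel-verified Lean document; each statement's English description precedes it below -/
import Mathlib

section
/- For every s > 0 there exist constants ε₁ > 0 and L ∈ ℝ such that for every ε ∈ (0, ε₁) and every monotone traveling wave profile (N, 𝒫) for the parameters s and ε (with N and 𝒫 additionally assumed three times differentiable so that second derivatives are defined), the following bounds hold for all z ∈ ℝ: |N(z)| ≤ L, |N'(z)| ≤ L, |N''(z)| ≤ L, |𝒫(z)| ≤ L, |𝒫'(z)| ≤ L, |𝒫''(z)| ≤ L; moreover |(1/N)'(z)| + |(1/N)''(z)| ≤ L / N(z) and |(1/√N)'(z)| ≤ L / √(N(z)). -/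
open MeasureTheory Filter Topology

noncomputable section

namespace KSWave

/-- Partial derivative in the first variable of a function of two real variables. -/
def dz2 (f : ℝ → ℝ → ℝ) : ℝ → ℝ → ℝ := fun z y => deriv (fun u => f u y) z

/-- Partial derivative in the second variable of a function of two real variables. -/
def dy2 (f : ℝ → ℝ → ℝ) : ℝ → ℝ → ℝ := fun z y => deriv (fun v => f z v) y

/-- Mixed partial derivative `∂_z^i ∂_y^j f`. -/
def pd (i j : ℕ) (f : ℝ → ℝ → ℝ) : ℝ → ℝ → ℝ := dz2^[i] (dy2^[j] f)

/-- Integral over the strip `Ω = ℝ × [0, lam]`. -/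
def intOmega (lam : ℝ) (g : ℝ → ℝ → ℝ) : ℝ := ∫ z : ℝ, ∫ y in (0:ℝ)..lam, g z y

/-- Squared `L²(Ω)` norm with weight `w(z)`. -/
def sqNormW (lam : ℝ) (w : ℝ → ℝ) (f : ℝ → ℝ → ℝ) : ℝ :=
  intOmega lam fun z y => (f z y) ^ 2 * w z

/-- Squared weighted Sobolev `H^k(Ω)` norm: `Σ_{i+j≤k} ∫_Ω |∂_z^i ∂_y^j f|² w(z)`. -/
def sobNormW (lam : ℝ) (w : ℝ → ℝ) (k : ℕ) (f : ℝ → ℝ → ℝ) : ℝ :=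
  ∑ i ∈ Finset.range (k + 1), ∑ j ∈ Finset.range (k + 1 - i), sqNormW lam w (pd i j f)

/-- Squared weighted `L²` norm of the `l`-th order gradient: `Σ_{i+j=l} ∫_Ω |∂_z^i ∂_y^j f|² w(z)`. -/
def gradNormW (lam : ℝ) (w : ℝ → ℝ) (l : ℕ) (f : ℝ → ℝ → ℝ) : ℝ :=
  ∑ i ∈ Finset.range (l + 1), sqNormW lam w (pd i (l - i) f)

/-- Squared weighted `H^k` norm of the gradient `∇f = (∂_z f, ∂_y f)`. -/
def gradSobW (lam : ℝ) (w : ℝ → ℝ) (k : ℕ) (f : ℝ → ℝ → ℝ) : ℝ :=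
  sobNormW lam w k (pd 1 0 f) + sobNormW lam w k (pd 0 1 f)

/-- Partial derivative in the first variable (z or x). -/
def DZ (f : ℝ → ℝ → ℝ → ℝ) : ℝ → ℝ → ℝ → ℝ := fun z y t => deriv (fun u => f u y t) z

/-- Partial derivative in the second variable (y). -/
def DY (f : ℝ → ℝ → ℝ → ℝ) : ℝ → ℝ → ℝ → ℝ := fun z y t => deriv (fun v => f z v t) y

/-- Partial derivative in the third variable (time). -/
def DT (f : ℝ → ℝ → ℝ → ℝ) : ℝ → ℝ → ℝ → ℝ := fun z y t => deriv (fun τ => f z y τ) t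

/-- Spatial Laplacian in the first two variables. -/
def LAP (f : ℝ → ℝ → ℝ → ℝ) : ℝ → ℝ → ℝ → ℝ :=
  fun z y t => DZ (DZ f) z y t + DY (DY f) z y t

/-- Time slice of a time-dependent function. -/
def slice (f : ℝ → ℝ → ℝ → ℝ) (t : ℝ) : ℝ → ℝ → ℝ := fun z y => f z y t

/-- Divergence of the vector field `(φ1, φ2)` in the spatial variables. -/
def divphi (φ1 φ2 : ℝ → ℝ → ℝ → ℝ) : ℝ → ℝ → ℝ → ℝ :=
  fun z y t => DZ φ1 z y t + DY φ2 z y t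

/-- A traveling wave profile `(N, 𝒫)` for the parameters `s`, `ε`:
a pair of `C²` functions solving `-s N' - N'' = (𝒫 N)'`, `-s 𝒫' - ε 𝒫'' = (N - ε 𝒫²)'`
with the front boundary conditions. -/
structure IsProfile (s ε : ℝ) (N P : ℝ → ℝ) : Prop where
  contDiff_N : ContDiff ℝ 2 N
  contDiff_P : ContDiff ℝ 2 P
  ode_N : ∀ z : ℝ, -s * deriv N z - deriv (deriv N) z = deriv (fun u => P u * N u) z
  ode_P : ∀ z : ℝ, -s * deriv P z - ε * deriv (deriv P) z
      = deriv (fun u => N u - ε * (P u) ^ 2) z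
  N_atBot : Tendsto N atBot (nhds ((1 + ε) * s ^ 2))
  N_atTop : Tendsto N atTop (nhds 0)
  P_atBot : Tendsto P atBot (nhds (-s))
  P_atTop : Tendsto P atTop (nhds 0)
  dN_atBot : Tendsto (deriv N) atBot (nhds 0)
  dN_atTop : Tendsto (deriv N) atTop (nhds 0)
  dP_atBot : Tendsto (deriv P) atBot (nhds 0)
  dP_atTop : Tendsto (deriv P) atTop (nhds 0)

/-- A monotone traveling wave profile. -/
structure IsMonotoneProfile (s ε : ℝ) (N P : ℝ → ℝ) extends IsProfile s ε N P : Prop where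
  N_pos : ∀ z : ℝ, 0 < N z
  N_lt : ∀ z : ℝ, N z < (1 + ε) * s ^ 2
  dN_neg : ∀ z : ℝ, deriv N z < 0
  P_gt : ∀ z : ℝ, -s < P z
  P_neg : ∀ z : ℝ, P z < 0
  dP_pos : ∀ z : ℝ, 0 < deriv P z

/-- `(φ1, φ2, ψ)` is a smooth, `lam`-periodic-in-`y` solution of the perturbation system
`∂ₜφ - s ∂_z φ - Δφ = N ∇ψ + (𝒫 ∇·φ, 0) + (∇·φ) ∇ψ`,
`∂ₜψ - s ∂_z ψ - ε Δψ = -2ε P·∇ψ - ε |∇ψ|² + ∇·φ`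
for times `t ∈ S`. -/
structure IsPerturbationSolution (s ε lam : ℝ) (N P : ℝ → ℝ)
    (φ1 φ2 ψ : ℝ → ℝ → ℝ → ℝ) (S : Set ℝ) : Prop where
  smooth_φ1 : ContDiff ℝ (⊤ : ℕ∞) fun q : ℝ × ℝ × ℝ => φ1 q.1 q.2.1 q.2.2
  smooth_φ2 : ContDiff ℝ (⊤ : ℕ∞) fun q : ℝ × ℝ × ℝ => φ2 q.1 q.2.1 q.2.2
  smooth_ψ : ContDiff ℝ (⊤ : ℕ∞) fun q : ℝ × ℝ × ℝ => ψ q.1 q.2.1 q.2.2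
  periodic_φ1 : ∀ z y t : ℝ, φ1 z (y + lam) t = φ1 z y t
  periodic_φ2 : ∀ z y t : ℝ, φ2 z (y + lam) t = φ2 z y t
  periodic_ψ : ∀ z y t : ℝ, ψ z (y + lam) t = ψ z y t
  eq_φ1 : ∀ z y : ℝ, ∀ t ∈ S,
    DT φ1 z y t - s * DZ φ1 z y t - LAP φ1 z y t
      = N z * DZ ψ z y t + P z * divphi φ1 φ2 z y t + divphi φ1 φ2 z y t * DZ ψ z y t
  eq_φ2 : ∀ z y : ℝ, ∀ t ∈ S,
    DT φ2 z y t - s * DZ φ2 z y t - LAP φ2 z y t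
      = N z * DY ψ z y t + divphi φ1 φ2 z y t * DY ψ z y t
  eq_ψ : ∀ z y : ℝ, ∀ t ∈ S,
    DT ψ z y t - s * DZ ψ z y t - ε * LAP ψ z y t
      = -(2 * ε) * (P z * DZ ψ z y t) - ε * ((DZ ψ z y t) ^ 2 + (DY ψ z y t) ^ 2)
        + divphi φ1 φ2 z y t

/-- The quantity `‖φ(t)‖²_{H³_w} + ‖ψ(t)‖²_{H³} + ‖∇ψ(t)‖²_{H²_w}`. -/
def energy (lam : ℝ) (w : ℝ → ℝ) (φ1 φ2 ψ : ℝ → ℝ → ℝ → ℝ) (t : ℝ) : ℝ :=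
  sobNormW lam w 3 (slice φ1 t) + sobNormW lam w 3 (slice φ2 t)
    + sobNormW lam (fun _ => 1) 3 (slice ψ t) + gradSobW lam w 2 (slice ψ t)

/-- `M(t) = sup_{σ ∈ [0,t]} ( ‖φ(σ)‖²_{H³_w} + ‖ψ(σ)‖²_{H³} + ‖∇ψ(σ)‖²_{H²_w} )`. -/
def MM (lam : ℝ) (w : ℝ → ℝ) (φ1 φ2 ψ : ℝ → ℝ → ℝ → ℝ) (t : ℝ) : ℝ :=
  sSup (energy lam w φ1 φ2 ψ '' Set.Icc 0 t)

/-- `(n, p1, p2)` satisfies, at the point `(x,y,t)`, the transformed Keller-Segel system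
`∂ₜn - Δn = ∇·(n p)`, `∂ₜp - ε Δp = -2ε (p·∇)p + ∇n`. -/
def IsNPSolutionAt (ε : ℝ) (n p1 p2 : ℝ → ℝ → ℝ → ℝ) (x y t : ℝ) : Prop :=
  (DT n x y t - LAP n x y t
      = DZ (fun a b c => n a b c * p1 a b c) x y t
        + DY (fun a b c => n a b c * p2 a b c) x y t)
  ∧ (DT p1 x y t - ε * LAP p1 x y t
      = -(2 * ε) * (p1 x y t * DZ p1 x y t + p2 x y t * DY p1 x y t) + DZ n x y t)
  ∧ (DT p2 x y t - ε * LAP p2 x y t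
      = -(2 * ε) * (p1 x y t * DZ p2 x y t + p2 x y t * DY p2 x y t) + DY n x y t)

end KSWave

namespace KSWave

private lemma cd2_deriv' {f : ℝ → ℝ} (h : ContDiff ℝ 2 f) : Differentiable ℝ (deriv f) := by
  have e : (2 : WithTop ℕ∞) = 1 + 1 := by norm_num
  rw [e] at h
  exact ((contDiff_succ_iff_deriv.mp h).2.2).differentiable one_ne_zero

private lemma cd3_deriv2' {f : ℝ → ℝ} (h : ContDiff ℝ 3 f) : Differentiable ℝ (deriv (deriv f)) := by
  have e : (3 : WithTop ℕ∞) = 2 + 1 := by norm_num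
  rw [e] at h
  exact cd2_deriv' ((contDiff_succ_iff_deriv.mp h).2.2)

private lemma maxlem' (f : ℝ → ℝ) (hf : Continuous f) (hb : Tendsto f atBot (nhds 0))
    (ht : Tendsto f atTop (nhds 0)) :
    (∀ z, f z ≤ 0) ∨ ∃ c, (∀ z, f z ≤ f c) ∧ deriv f c = 0 := by
  by_cases h : ∀ z, f z ≤ 0
  · exact Or.inl h
  push_neg at h
  obtain ⟨z₀, hz₀⟩ := h
  right
  obtain ⟨B, hB⟩ := (ht.eventually (gt_mem_nhds hz₀)).exists_forall_of_atTop
  obtain ⟨A, hA⟩ := (hb.eventually (gt_mem_nhds hz₀)).exists_forall_of_atBot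
  set a := min A z₀
  set b := max B z₀
  obtain ⟨c, hc, hmax⟩ := (isCompact_Icc (a := a) (b := b)).exists_isMaxOn
    ⟨z₀, Set.mem_Icc.mpr ⟨min_le_right _ _, le_max_right _ _⟩⟩ hf.continuousOn
  have hz0c : f z₀ ≤ f c := hmax (Set.mem_Icc.mpr ⟨min_le_right _ _, le_max_right _ _⟩)
  have hglob : ∀ z, f z ≤ f c := by
    intro z
    rcases le_or_gt z b with hzb | hzb
    · rcases le_or_gt a z with haz | haz
      · exact hmax (Set.mem_Icc.mpr ⟨haz, hzb⟩)
      · exact ((hA z (le_trans haz.le (min_le_left _ _))).le).trans hz0c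
    · exact ((hB z (le_trans (le_max_left _ _) hzb.le)).le).trans hz0c
  have hloc : IsLocalMax f c := Filter.Eventually.of_forall hglob
  exact ⟨c, hglob, hloc.deriv_eq_zero⟩

set_option maxHeartbeats 2000000 in
/-- uniform bounds for monotone traveling wave profiles, independent of
`ε ∈ (0, ε₁)`. -/
theorem profile_uniform_bounds :
    ∀ s > (0:ℝ), ∃ ε₁ > (0:ℝ), ∃ L : ℝ, ∀ ε ∈ Set.Ioo (0:ℝ) ε₁,
      ∀ N P : ℝ → ℝ, IsMonotoneProfile s ε N P →
        ContDiff ℝ 3 N → ContDiff ℝ 3 P →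
        ∀ z : ℝ,
          |N z| ≤ L ∧ |deriv N z| ≤ L ∧ |deriv (deriv N) z| ≤ L ∧
          |P z| ≤ L ∧ |deriv P z| ≤ L ∧ |deriv (deriv P) z| ≤ L ∧
          |deriv (fun u => 1 / N u) z| + |deriv (deriv (fun u => 1 / N u)) z| ≤ L / N z ∧
          |deriv (fun u => 1 / Real.sqrt (N u)) z| ≤ L / Real.sqrt (N z) := by
  intro s hs
  refine ⟨1, one_pos, 20*(1 + s + s^2 + s^3 + s^4), ?_⟩
  rintro ε ⟨hε0, hε1⟩ N P hm hN3 hP3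
  set L : ℝ := 20*(1 + s + s^2 + s^3 + s^4) with hLdef
  have hmono : ∀ k : ℕ, (0:ℝ) ≤ s^k := fun k => pow_nonneg hs.le k
  have hm0 := hmono 1; have hm2 := hmono 2; have hm3 := hmono 3; have hm4 := hmono 4
  simp only [pow_one] at hm0
  -- differentiability
  have hN1 : Differentiable ℝ N := hm.contDiff_N.differentiable (by norm_num)
  have hP1 : Differentiable ℝ P := hm.contDiff_P.differentiable (by norm_num)
  have hN2 : Differentiable ℝ (deriv N) := cd2_deriv' hm.contDiff_N
  have hP2 : Differentiable ℝ (deriv P) := cd2_deriv' hm.contDiff_P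
  have hP3d : Differentiable ℝ (deriv (deriv P)) := cd3_deriv2' hP3
  have hQcont : Continuous (deriv P) := hP2.continuous
  have hRcont : Continuous (deriv (deriv P)) := hP3d.continuous
  have hNpos := hm.N_pos
  have hNlt : ∀ z, N z < 2 * s^2 := by
    intro z
    have := hm.N_lt z
    nlinarith [hm.N_lt z]
  have hPlo := hm.P_gt
  have hPhi := hm.P_neg
  have hQpos := hm.dP_pos
  -- first integral for N : N' = -(s+P) N
  have h1 : ∀ z, deriv N z = -(s + P z) * N z := by
    set f : ℝ → ℝ := fun z => s * N z + deriv N z + P z * N z with hf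
    have hfd : Differentiable ℝ f := ((hN1.const_mul s).add hN2).add (hP1.mul hN1)
    have hf0 : ∀ x, deriv f x = 0 := by
      intro x
      have hA : HasDerivAt (fun z => s * N z) (s * deriv N x) x := ((hN1 x).hasDerivAt).const_mul s
      have hB : HasDerivAt (deriv N) (deriv (deriv N) x) x := (hN2 x).hasDerivAt
      have hC : HasDerivAt (fun u => P u * N u) (deriv (fun u => P u * N u) x) x :=
        ((hP1 x).mul (hN1 x)).hasDerivAt
      have hD : HasDerivAt f (s * deriv N x + deriv (deriv N) x + deriv (fun u => P u * N u) x) x :=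
        (hA.add hB).add hC
      rw [hD.deriv]
      linarith [hm.ode_N x]
    have hconst : ∀ x, f x = f 0 := fun x => is_const_of_deriv_eq_zero hfd hf0 x 0
    have hlim : Tendsto f atTop (nhds 0) := by
      have h := ((hm.N_atTop.const_mul s).add hm.dN_atTop).add (hm.P_atTop.mul hm.N_atTop)
      simpa using h
    have hlim2 : Tendsto f atTop (nhds (f 0)) := by
      have he : f = fun _ => f 0 := funext hconst
      rw [he]; exact tendsto_const_nhds
    have hf00 : f 0 = 0 := tendsto_nhds_unique hlim2 hlim
    intro z
    have hz : s * N z + deriv N z + P z * N z = 0 := by rw [← hf00]; exact hconst z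
    linear_combination hz
  -- first integral for P : ε P' = ε P² - s P - N
  have h2 : ∀ z, ε * deriv P z = ε * (P z)^2 - s * P z - N z := by
    set g : ℝ → ℝ := fun z => s * P z + ε * deriv P z + (N z - ε * (P z)^2) with hg
    have hgd : Differentiable ℝ g :=
      ((hP1.const_mul s).add (hP2.const_mul ε)).add (hN1.sub ((hP1.pow 2).const_mul ε))
    have hg0 : ∀ x, deriv g x = 0 := by
      intro x
      have hA : HasDerivAt (fun z => s * P z) (s * deriv P x) x := (hP1 x).hasDerivAt.const_mul s
      have hB : HasDerivAt (fun z => ε * deriv P z) (ε * deriv (deriv P) x) x :=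
        (hP2 x).hasDerivAt.const_mul ε
      have hC : HasDerivAt (fun u => N u - ε * (P u)^2) (deriv (fun u => N u - ε * (P u)^2) x) x :=
        ((hN1 x).sub (((hP1 x).pow 2).const_mul ε)).hasDerivAt
      have hD : HasDerivAt g
          (s * deriv P x + ε * deriv (deriv P) x + deriv (fun u => N u - ε * (P u)^2) x) x :=
        (hA.add hB).add hC
      rw [hD.deriv]
      linarith [hm.ode_P x]
    have hconst : ∀ x, g x = g 0 := fun x => is_const_of_deriv_eq_zero hgd hg0 x 0
    have hlim : Tendsto g atTop (nhds 0) := by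
      have h := ((hm.P_atTop.const_mul s).add (hm.dP_atTop.const_mul ε)).add
        (hm.N_atTop.sub ((hm.P_atTop.pow 2).const_mul ε))
      simpa using h
    have hlim2 : Tendsto g atTop (nhds (g 0)) := by
      have he : g = fun _ => g 0 := funext hconst
      rw [he]; exact tendsto_const_nhds
    have hg00 : g 0 = 0 := tendsto_nhds_unique hlim2 hlim
    intro z
    have hz : s * P z + ε * deriv P z + (N z - ε * (P z)^2) = 0 := by
      rw [← hg00]; exact hconst z
    linear_combination hz
  -- differentiated P identity : ε P'' = 2ε P P' - s P' - N'
  have h3 : ∀ x, ε * deriv (deriv P) x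
      = 2*ε*(P x * deriv P x) - s * deriv P x - deriv N x := by
    intro x
    have hde : (fun z => ε * deriv P z) = fun z => ε * (P z)^2 - s * P z - N z := funext h2
    have hL : HasDerivAt (fun z => ε * deriv P z) (ε * deriv (deriv P) x) x :=
      (hP2 x).hasDerivAt.const_mul ε
    have hR : HasDerivAt (fun z => ε * (P z)^2 - s * P z - N z)
        (2*ε*(P x * deriv P x) - s * deriv P x - deriv N x) x := by
      have h := ((((hP1 x).hasDerivAt.pow 2).const_mul ε).sub
        ((hP1 x).hasDerivAt.const_mul s)).sub (hN1 x).hasDerivAt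
      refine h.congr_deriv ?_
      ring
    have e : deriv (fun z => ε * deriv P z) x
        = deriv (fun z => ε * (P z)^2 - s * P z - N z) x := by rw [hde]
    rw [hL.deriv, hR.deriv] at e
    exact e
  -- N'' = -P' N + (s+P)² N
  have h4 : ∀ x, deriv (deriv N) x = -(deriv P x) * N x + (s + P x)^2 * N x := by
    intro x
    have hdN : deriv N = fun z => -(s + P z) * N z := funext h1
    have hSP : HasDerivAt (fun z => -(s + P z)) (-deriv P x) x := by
      have h := ((hasDerivAt_const x s).add (hP1 x).hasDerivAt).neg
      rw [zero_add] at h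
      exact h
    have hR : HasDerivAt (fun z => -(s + P z) * N z)
        (-(deriv P x) * N x + -(s + P x) * deriv N x) x := hSP.mul (hN1 x).hasDerivAt
    have e0 : deriv (deriv N) x = deriv (fun z => -(s + P z) * N z) x :=
      congrFun (congrArg deriv hdN) x
    rw [e0, hR.deriv, h1 x]; ring
  -- bound for P'
  have hQb : ∀ z, deriv P z ≤ 2 * s^2 := by
    rcases maxlem' (deriv P) hQcont hm.dP_atBot hm.dP_atTop with h | ⟨c, hc, hc0⟩
    · exact fun z => absurd (h z) (not_le.mpr (hQpos z))
    · intro z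
      have h3c := h3 c
      rw [hc0, mul_zero] at h3c
      have key : deriv P c * (s - 2*ε*P c) = (s + P c) * N c := by
        linear_combination h3c - h1 c
      have hQc : deriv P c ≤ 2 * s^2 := by
        nlinarith [hQpos c, hNpos c, hNlt c, hPlo c, hPhi c,
          mul_nonneg (mul_nonneg hε0.le (neg_nonneg.mpr (hPhi c).le)) (hQpos c).le,
          mul_pos (show (0:ℝ) < s + P c by linarith [hPlo c]) (hNpos c)]
      exact (hc z).trans hQc
  -- bound for N''
  have hN2b : ∀ z, |deriv (deriv N) z| ≤ 6 * s^4 := by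
    intro z
    rw [h4 z]
    have h1' : 0 < s + P z := by linarith [hPlo z]
    have h2' : s + P z ≤ s := by linarith [hPhi z]
    have hsq : (s + P z)^2 ≤ s^2 := by nlinarith [hPlo z, hPhi z]
    have hb1 : (s + P z)^2 * N z ≤ s^2 * (2*s^2) :=
      mul_le_mul hsq (hNlt z).le (hNpos z).le hm2
    have hb2 : deriv P z * N z ≤ (2*s^2) * (2*s^2) :=
      mul_le_mul (hQb z) (hNlt z).le (hNpos z).le (by positivity)
    rw [abs_le]
    constructor
    · nlinarith [hb1, hb2, mul_nonneg (sq_nonneg (s + P z)) (hNpos z).le]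
    · nlinarith [hb1, hb2, mul_pos (hQpos z) (hNpos z)]
  -- limits of P''
  have hRrep : (fun z => deriv (deriv P) z)
      = fun z => (2*ε*(P z * deriv P z) - s * deriv P z - deriv N z) / ε := by
    funext z
    rw [eq_div_iff hε0.ne']
    linear_combination h3 z
  have hRtop : Tendsto (deriv (deriv P)) atTop (nhds 0) := by
    have h : Tendsto (fun z => (2*ε*(P z * deriv P z) - s * deriv P z - deriv N z) / ε)
        atTop (nhds ((2*ε*(0*0) - s*0 - 0)/ε)) :=
      ((((hm.P_atTop.mul hm.dP_atTop).const_mul (2*ε)).sub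
        (hm.dP_atTop.const_mul s)).sub hm.dN_atTop).div_const ε
    rw [show (fun z => deriv (deriv P) z) = deriv (deriv P) from rfl] at hRrep
    rw [hRrep]
    simpa using h
  have hRbot : Tendsto (deriv (deriv P)) atBot (nhds 0) := by
    have h : Tendsto (fun z => (2*ε*(P z * deriv P z) - s * deriv P z - deriv N z) / ε)
        atBot (nhds ((2*ε*((-s)*0) - s*0 - 0)/ε)) :=
      ((((hm.P_atBot.mul hm.dP_atBot).const_mul (2*ε)).sub
        (hm.dP_atBot.const_mul s)).sub hm.dN_atBot).div_const ε
    rw [show (fun z => deriv (deriv P) z) = deriv (deriv P) from rfl] at hRrep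
    rw [hRrep]
    simpa using h
  -- second differentiated identity : ε P''' = 2ε (P'² + P P'') - s P'' - N''
  have h5 : ∀ x, ε * deriv (deriv (deriv P)) x
      = 2*ε*(deriv P x * deriv P x + P x * deriv (deriv P) x)
        - s * deriv (deriv P) x - deriv (deriv N) x := by
    intro x
    have hde2 : (fun z => ε * deriv (deriv P) z)
        = fun z => 2*ε*(P z * deriv P z) - s * deriv P z - deriv N z := funext h3
    have hL : HasDerivAt (fun z => ε * deriv (deriv P) z) (ε * deriv (deriv (deriv P)) x) x :=
      (hP3d x).hasDerivAt.const_mul ε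
    have hPQ : HasDerivAt (fun z => P z * deriv P z)
        (deriv P x * deriv P x + P x * deriv (deriv P) x) x :=
      (hP1 x).hasDerivAt.mul (hP2 x).hasDerivAt
    have hR : HasDerivAt (fun z => 2*ε*(P z * deriv P z) - s * deriv P z - deriv N z)
        (2*ε*(deriv P x * deriv P x + P x * deriv (deriv P) x)
          - s * deriv (deriv P) x - deriv (deriv N) x) x :=
      ((hPQ.const_mul (2*ε)).sub ((hP2 x).hasDerivAt.const_mul s)).sub (hN2 x).hasDerivAt
    have e : deriv (fun z => ε * deriv (deriv P) z) x
        = deriv (fun z => 2*ε*(P z * deriv P z) - s * deriv P z - deriv N z) x := by rw [hde2]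
    rw [hL.deriv, hR.deriv] at e
    exact e
  -- bound at critical points of P''
  have hcrit : ∀ c, deriv (deriv (deriv P)) c = 0 → |deriv (deriv P) c| ≤ 14 * s^3 := by
    intro c hc
    have h5c := h5 c
    rw [hc, mul_zero] at h5c
    have key : deriv (deriv P) c * (s - 2*ε*P c)
        = 2*ε*(deriv P c)^2 - deriv (deriv N) c := by
      linear_combination h5c
    have hNc := hN2b c
    rw [abs_le] at hNc ⊢
    have hden : s ≤ s - 2*ε*P c := by nlinarith [hPhi c, hε0]
    have hQ2 : (deriv P c)^2 ≤ 4*s^4 := by nlinarith [hQb c, hQpos c]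
    have hKub : 2*ε*(deriv P c)^2 - deriv (deriv N) c ≤ 14*s^4 := by
      nlinarith [hQ2, sq_nonneg (deriv P c), hε0, hε1, hNc.1]
    have hKlb : -(6*s^4) ≤ 2*ε*(deriv P c)^2 - deriv (deriv N) c := by
      nlinarith [mul_nonneg (by positivity : (0:ℝ) ≤ 2*ε) (sq_nonneg (deriv P c)), hNc.2]
    constructor
    · by_contra hcon
      push_neg at hcon
      have hRneg : deriv (deriv P) c < 0 := by nlinarith [pow_pos hs 3]
      have hmm : deriv (deriv P) c * (s - 2*ε*P c) ≤ deriv (deriv P) c * s :=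
        mul_le_mul_of_nonpos_left hden hRneg.le
      have hst : deriv (deriv P) c * s < (-(14*s^3)) * s :=
        mul_lt_mul_of_pos_right hcon hs
      nlinarith [key, hKlb]
    · by_contra hcon
      push_neg at hcon
      have hRpos : (0:ℝ) < deriv (deriv P) c := by nlinarith [pow_pos hs 3]
      have hmm : deriv (deriv P) c * s ≤ deriv (deriv P) c * (s - 2*ε*P c) :=
        mul_le_mul_of_nonneg_left hden hRpos.le
      have hst : (14*s^3) * s < deriv (deriv P) c * s :=
        mul_lt_mul_of_pos_right hcon hs
      nlinarith [key, hKub]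
  -- global bound for P''
  have hRb : ∀ z, |deriv (deriv P) z| ≤ 14 * s^3 := by
    have hub : ∀ z, deriv (deriv P) z ≤ 14 * s^3 := by
      rcases maxlem' (deriv (deriv P)) hRcont hRbot hRtop with h | ⟨c, hc, hc0⟩
      · intro z; nlinarith [h z]
      · intro z
        have := (abs_le.mp (hcrit c hc0)).2
        linarith [hc z]
    have hlb : ∀ z, -(14 * s^3) ≤ deriv (deriv P) z := by
      have hnegcont : Continuous (fun z => -(deriv (deriv P) z)) := hRcont.neg
      have hnb : Tendsto (fun z => -(deriv (deriv P) z)) atBot (nhds 0) := by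
        simpa using hRbot.neg
      have hnt : Tendsto (fun z => -(deriv (deriv P) z)) atTop (nhds 0) := by
        simpa using hRtop.neg
      rcases maxlem' (fun z => -(deriv (deriv P) z)) hnegcont hnb hnt with h | ⟨c, hc, hc0⟩
      · intro z; nlinarith [h z]
      · intro z
        have hc0' : deriv (deriv (deriv P)) c = 0 := by
          have : deriv (fun z => -(deriv (deriv P) z)) c = -(deriv (deriv (deriv P)) c) := by
            simp [deriv.neg]
          rw [this] at hc0
          linarith
        have := (abs_le.mp (hcrit c hc0')).1
        have h2 := hc z
        simp only [neg_le_neg_iff] at h2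
        linarith
    intro z
    rw [abs_le]
    exact ⟨hlb z, hub z⟩
  intro z
  have hNz := hNpos z
  have hNne : N z ≠ 0 := hNz.ne'
  have hsp : 0 < s + P z := by linarith [hPlo z]
  have hsps : s + P z ≤ s := by linarith [hPhi z]
  -- 1/N derivatives
  have d1 : ∀ x, deriv (fun u => 1 / N u) x = (s + P x) / N x := by
    intro x
    have hinv : HasDerivAt (fun u => 1 / N u) (-(deriv N x) / (N x)^2) x := by
      have h := (hN1 x).hasDerivAt.inv (hNpos x).ne'
      simp only [one_div]
      exact h
    have hx : N x ≠ 0 := (hNpos x).ne'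
    rw [hinv.deriv, h1 x]
    field_simp
  have d2 : deriv (deriv (fun u => 1 / N u)) z = (deriv P z + (s + P z)^2) / N z := by
    have hd1f : deriv (fun u => 1 / N u) = fun x => (s + P x) / N x := funext d1
    rw [hd1f]
    have hnum : HasDerivAt (fun x => s + P x) (deriv P z) z := by
      have h := (hasDerivAt_const z s).add (hP1 z).hasDerivAt
      rw [zero_add] at h
      exact h
    have hdiv : HasDerivAt (fun x => (s + P x) / N x)
        ((deriv P z * N z - (s + P z) * deriv N z) / N z ^ 2) z := hnum.div (hN1 z).hasDerivAt hNne
    rw [hdiv.deriv, h1 z]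
    field_simp
    ring
  -- sqrt derivative
  have hsqpos : 0 < Real.sqrt (N z) := Real.sqrt_pos.mpr hNz
  have d3 : deriv (fun u => 1 / Real.sqrt (N u)) z = (s + P z) / (2 * Real.sqrt (N z)) := by
    have hs1 : HasDerivAt (fun u => Real.sqrt (N u))
        (1 / (2 * Real.sqrt (N z)) * deriv N z) z := by
      have := (Real.hasDerivAt_sqrt (hNpos z).ne').comp z (hN1 z).hasDerivAt
      exact this
    have hs2 : HasDerivAt (fun u => 1 / Real.sqrt (N u))
        (-(1 / (2 * Real.sqrt (N z)) * deriv N z) / (Real.sqrt (N z))^2) z := by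
      have h := hs1.inv hsqpos.ne'
      simp only [one_div] at h ⊢
      exact h
    rw [hs2.deriv, h1 z, Real.sq_sqrt hNz.le]
    field_simp
  refine ⟨?_, ?_, ?_, ?_, ?_, ?_, ?_, ?_⟩
  · rw [abs_le]; constructor
    · nlinarith [hNpos z, hNlt z]
    · nlinarith [hNpos z, hNlt z]
  · rw [h1 z, abs_le]; constructor
    · nlinarith [mul_pos hsp (hNpos z), hNlt z]
    · nlinarith [mul_pos hsp (hNpos z), hNlt z]
  · have := hN2b z; rw [abs_le] at this ⊢
    constructor
    · nlinarith [this.1]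
    · nlinarith [this.2]
  · rw [abs_le]; constructor
    · nlinarith [hPlo z]
    · nlinarith [hPhi z]
  · rw [abs_le]; constructor
    · nlinarith [hQpos z]
    · nlinarith [hQb z]
  · have := hRb z; rw [abs_le] at this ⊢
    constructor
    · nlinarith [this.1]
    · nlinarith [this.2]
  · rw [d1 z, d2]
    have e1 : |(s + P z) / N z| = (s + P z) / N z :=
      abs_of_nonneg (div_nonneg hsp.le hNz.le)
    have e2 : |(deriv P z + (s + P z)^2) / N z| = (deriv P z + (s + P z)^2) / N z :=
      abs_of_nonneg (div_nonneg (by nlinarith [hQpos z, sq_nonneg (s + P z)]) hNz.le)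
    rw [e1, e2, ← add_div, div_le_div_iff₀ hNz hNz]
    have hsum : s + P z + (deriv P z + (s + P z)^2) ≤ L := by
      nlinarith [hQb z, hsps, hsp, mul_le_mul_of_nonneg_right hsps hsp.le,
        mul_le_mul_of_nonneg_left hsps hm0]
    exact mul_le_mul_of_nonneg_right hsum hNz.le
  · rw [d3]
    have e1 : |(s + P z) / (2 * Real.sqrt (N z))| = (s + P z) / (2 * Real.sqrt (N z)) :=
      abs_of_nonneg (div_nonneg hsp.le (by positivity))
    rw [e1, div_le_div_iff₀ (by positivity) hsqpos]
    nlinarith [mul_pos hsqpos hsqpos, hsqpos, mul_le_mul_of_nonneg_right hsps hsqpos.le]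
end KSWave
end
end

section
/- For every s > 0 there exists ε₁ > 0 such that for every ε ∈ (0, ε₁) and every monotone traveling wave profile (N, 𝒫) for the parameters s and ε, there exists a point z₀ ∈ ℝ satisfying 𝒫(z₀) = -s/2 and N(z₀) ≥ s²/4. -/
open MeasureTheory Filter Topology

noncomputable section

namespace KSWave2

/-- If a differentiable function has zero derivative everywhere and tends to 0 along a
nontrivial filter, it is identically 0. -/
lemma aux_const_zero {f : ℝ → ℝ} {l : Filter ℝ} [l.NeBot]
    (hd : Differentiable ℝ f) (h0 : ∀ z, deriv f z = 0)
    (hl : Tendsto f l (nhds 0)) : ∀ z, f z = 0 := by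
  intro z
  have hconst : ∀ x, f x = f z := fun x => is_const_of_deriv_eq_zero hd h0 x z
  have h1 : Tendsto f l (nhds (f z)) := by
    have : f = fun _ => f z := funext hconst
    rw [this]; exact tendsto_const_nhds
  exact tendsto_nhds_unique h1 hl

end KSWave2

namespace KSWave

/-- existence of a point `z₀` in the common transition layer:
`𝒫(z₀) = -s/2` and `N(z₀) ≥ s²/4`. -/
theorem exists_transition_point :
    ∀ s > (0:ℝ), ∃ ε₁ > (0:ℝ), ∀ ε ∈ Set.Ioo (0:ℝ) ε₁,
      ∀ N P : ℝ → ℝ, IsMonotoneProfile s ε N P →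
        ∃ z₀ : ℝ, P z₀ = -s / 2 ∧ s ^ 2 / 4 ≤ N z₀ := by
  intro s hs
  refine ⟨1/5, by norm_num, ?_⟩
  rintro ε ⟨hε0, hε1⟩ N P h
  -- differentiability facts
  have hN2 := h.contDiff_N
  have hP2 := h.contDiff_P
  have hNd : Differentiable ℝ N := hN2.differentiable two_ne_zero
  have hPd : Differentiable ℝ P := hP2.differentiable two_ne_zero
  have hdN1 : ContDiff ℝ 1 (deriv N) :=
    (contDiff_succ_iff_deriv.mp (by exact_mod_cast hN2 : ContDiff ℝ ((1:ℕ∞)+1) N)).2.2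
  have hdP1 : ContDiff ℝ 1 (deriv P) :=
    (contDiff_succ_iff_deriv.mp (by exact_mod_cast hP2 : ContDiff ℝ ((1:ℕ∞)+1) P)).2.2
  have hdNd : Differentiable ℝ (deriv N) := hdN1.differentiable one_ne_zero
  have hdPd : Differentiable ℝ (deriv P) := hdP1.differentiable one_ne_zero
  -- Step A: deriv N = -(s+P) * N
  have hPN : Differentiable ℝ (fun z => P z * N z) := hPd.mul hNd
  set G : ℝ → ℝ := fun z => -s * N z - deriv N z - P z * N z with hGdef
  have hGd : Differentiable ℝ G := ((hNd.const_mul _).sub hdNd).sub hPN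
  have hGderiv : ∀ z, deriv G z = 0 := by
    intro z
    have h1 : deriv G z
        = (-s * deriv N z - deriv (deriv N) z) - deriv (fun u => P u * N u) z := by
      rw [hGdef]
      rw [deriv_fun_sub (f := fun z => -s * N z - deriv N z) (g := fun z => P z * N z) (((hNd.const_mul (-s)).sub hdNd) z) (hPN z),
        deriv_fun_sub (f := fun z => -s * N z) (g := deriv N) ((hNd.const_mul (-s)) z) (hdNd z), deriv_const_mul _ (hNd z)]
    rw [h1, h.ode_N z]; ring
  have hGlim : Tendsto G atTop (nhds 0) := by
    have h2 : Tendsto G atTop (nhds (-s * 0 - 0 - 0 * 0)) :=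
      ((h.N_atTop.const_mul (-s)).sub h.dN_atTop).sub (h.P_atTop.mul h.N_atTop)
    simpa using h2
  have hG0 : ∀ z, G z = 0 := KSWave2.aux_const_zero hGd hGderiv hGlim
  have hN' : ∀ z, deriv N z = -(s + P z) * N z := by
    intro z
    have := hG0 z
    simp only [hGdef] at this
    linear_combination -this
  -- Step B: ε * deriv P = ε P^2 - s P - N
  have hNεP2 : Differentiable ℝ (fun u => N u - ε * (P u) ^ 2) :=
    hNd.sub ((hPd.pow 2).const_mul ε)
  set F : ℝ → ℝ := fun z => -s * P z - ε * deriv P z - (N z - ε * (P z) ^ 2) with hFdef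
  have hFd : Differentiable ℝ F := ((hPd.const_mul _).sub (hdPd.const_mul _)).sub hNεP2
  have hFderiv : ∀ z, deriv F z = 0 := by
    intro z
    have h1 : deriv F z
        = (-s * deriv P z - ε * deriv (deriv P) z) - deriv (fun u => N u - ε * (P u) ^ 2) z := by
      rw [hFdef]
      rw [deriv_fun_sub (f := fun z => -s * P z - ε * deriv P z) (g := fun u => N u - ε * P u ^ 2) (((hPd.const_mul (-s)).sub (hdPd.const_mul ε)) z) (hNεP2 z),
        deriv_fun_sub (f := fun z => -s * P z) (g := fun z => ε * deriv P z) ((hPd.const_mul (-s)) z) ((hdPd.const_mul ε) z),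
        deriv_const_mul _ (hPd z), deriv_const_mul _ (hdPd z)]
    rw [h1, h.ode_P z]; ring
  have hFlim : Tendsto F atBot (nhds 0) := by
    have h2 : Tendsto F atBot
        (nhds (-s * (-s) - ε * 0 - ((1 + ε) * s ^ 2 - ε * (-s) ^ 2))) :=
      ((h.P_atBot.const_mul (-s)).sub (h.dP_atBot.const_mul ε)).sub
        (h.N_atBot.sub ((h.P_atBot.pow 2).const_mul ε))
    have hval : -s * (-s) - ε * 0 - ((1 + ε) * s ^ 2 - ε * (-s) ^ 2) = 0 := by ring
    rwa [hval] at h2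
  have hF0 : ∀ z, F z = 0 := KSWave2.aux_const_zero hFd hFderiv hFlim
  have hkey : ∀ z, ε * deriv P z = ε * (P z) ^ 2 - s * P z - N z := by
    intro z
    have := hF0 z
    simp only [hFdef] at this
    linear_combination -this
  -- Step C: set u = ε * deriv P and compute its derivative
  set u : ℝ → ℝ := fun z => ε * deriv P z with hudef
  have hueq : u = fun z => ε * (P z) ^ 2 - s * P z - N z := funext hkey
  have hu_cont : Continuous u := continuous_const.mul hdP1.continuous
  have hdu : ∀ z, deriv u z = (2 * ε * P z - s) * deriv P z + (s + P z) * N z := by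
    intro z
    rw [hueq]
    rw [deriv_fun_sub (f := fun z => ε * P z ^ 2 - s * P z) (g := N) (((hPd.pow 2).const_mul ε z).sub ((hPd.const_mul s) z)) (hNd z),
      deriv_fun_sub (f := fun z => ε * P z ^ 2) (g := fun z => s * P z) ((hPd.pow 2).const_mul ε z) ((hPd.const_mul s) z),
      deriv_const_mul (d := fun z => P z ^ 2) _ ((hPd.pow 2) z), deriv_const_mul _ (hPd z),
      deriv_fun_pow (hPd z) 2, hN' z]
    ring
  -- Step D: barrier argument, u ≤ K := ε (1+ε) s^2
  set K : ℝ := ε * (1 + ε) * s ^ 2 with hKdef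
  have hKpos : 0 < K := by positivity
  have hu_neg : ∀ x, K < u x → deriv u x < 0 := by
    intro x hx
    have hA : (1 + ε) * s ^ 2 < deriv P x := by
      have h1 : ε * ((1 + ε) * s ^ 2) < ε * deriv P x := by
        have : K < ε * deriv P x := hx
        calc ε * ((1 + ε) * s ^ 2) = K := by rw [hKdef]; ring
        _ < ε * deriv P x := this
      exact lt_of_mul_lt_mul_left h1 hε0.le
    have hP'pos := h.dP_pos x
    have hPneg := h.P_neg x
    have hPgt := h.P_gt x
    have hNpos := h.N_pos x
    have hNlt := h.N_lt x
    rw [hdu x]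
    have h1 : (2 * ε * P x - s) * deriv P x ≤ (-s) * deriv P x := by
      apply mul_le_mul_of_nonneg_right _ hP'pos.le
      nlinarith
    have h2 : (-s) * deriv P x < (-s) * ((1 + ε) * s ^ 2) := by
      apply mul_lt_mul_of_neg_left hA
      linarith
    have h3 : (s + P x) * N x ≤ s * ((1 + ε) * s ^ 2) := by
      apply mul_le_mul (by linarith) hNlt.le hNpos.le hs.le
    nlinarith
  have hubd : ∀ z, u z ≤ K := by
    by_contra hcon
    push_neg at hcon
    obtain ⟨z₁, hz₁⟩ := hcon
    have hulim : Tendsto u atBot (nhds 0) := by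
      have := h.dP_atBot.const_mul ε
      simpa using this
    have hev : ∀ᶠ z in atBot, u z < K := hulim.eventually (gt_mem_nhds hKpos)
    obtain ⟨a, ha1, ha2⟩ := (hev.and (eventually_le_atBot z₁)).exists
    set C : Set ℝ := Set.Icc a z₁ ∩ u ⁻¹' Set.Iic K with hCdef
    have hCclosed : IsClosed C := isClosed_Icc.inter (isClosed_Iic.preimage hu_cont)
    have hCne : C.Nonempty := ⟨a, ⟨le_refl a, ha2⟩, ha1.le⟩
    have hCbdd : BddAbove C := ⟨z₁, fun x hx => hx.1.2⟩
    set b : ℝ := sSup C with hbdef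
    have hbC : b ∈ C := hCclosed.csSup_mem hCne hCbdd
    have hbK : u b ≤ K := hbC.2
    have hbz₁ : b < z₁ := by
      rcases lt_or_eq_of_le hbC.1.2 with h' | h'
      · exact h'
      · exfalso; rw [h'] at hbK; linarith
    have hgt : ∀ x ∈ Set.Ioc b z₁, K < u x := by
      intro x hx
      by_contra hle
      push_neg at hle
      have hxC : x ∈ C := ⟨⟨le_trans hbC.1.1 hx.1.le, hx.2⟩, hle⟩
      have : x ≤ b := le_csSup hCbdd hxC
      exact absurd hx.1 (not_lt.mpr this)
    have hanti : StrictAntiOn u (Set.Icc b z₁) := by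
      apply strictAntiOn_of_deriv_neg (convex_Icc b z₁) hu_cont.continuousOn
      intro x hx
      rw [interior_Icc] at hx
      exact hu_neg x (hgt x ⟨hx.1, hx.2.le⟩)
    have := hanti ⟨le_refl b, hbz₁.le⟩ ⟨hbz₁.le, le_refl z₁⟩ hbz₁
    linarith
  -- Step E: find z₀ with P z₀ = -s/2
  have h1 : ∀ᶠ z in atBot, P z < -s / 2 := h.P_atBot.eventually (gt_mem_nhds (by linarith))
  have h2 : ∀ᶠ z in atTop, -s / 2 < P z := h.P_atTop.eventually (lt_mem_nhds (by linarith))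
  obtain ⟨b, hb⟩ := h2.exists
  obtain ⟨a, ha, hab⟩ := (h1.and (eventually_le_atBot b)).exists
  have hmem : (-s / 2) ∈ Set.Icc (P a) (P b) := ⟨ha.le, hb.le⟩
  obtain ⟨z₀, _, hz₀⟩ := intermediate_value_Icc hab hPd.continuous.continuousOn hmem
  refine ⟨z₀, hz₀, ?_⟩
  -- Step F: conclude
  have hNz : N z₀ = ε * (P z₀) ^ 2 - s * P z₀ - u z₀ := by
    have := hkey z₀
    simp only [hudef]
    linarith
  rw [hz₀] at hNz
  have hub := hubd z₀
  rw [hKdef] at hub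
  nlinarith [mul_nonneg (by linarith : (0:ℝ) ≤ 1/5 - ε) (sq_nonneg s),
    mul_nonneg (mul_nonneg hε0.le (by linarith : (0:ℝ) ≤ 1/5 - ε)) (sq_nonneg s),
    mul_nonneg hε0.le (sq_nonneg s)]

end KSWave
end
end

section
/- Let s > 0 and let N, 𝒫 : ℝ → ℝ be twice continuously differentiable with N(z) > 0 for all z, satisfying -s N' - N'' = (𝒫 N)' on ℝ, with N(z) → 0 and N'(z) → 0 as z → +∞, and with 𝒫 bounded. Then for every z ∈ ℝ one has -N'(z)/N(z) = s + 𝒫(z). -/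
open MeasureTheory Filter Topology

noncomputable section

namespace KSWave

/-- the pointwise relation `-N'/N = s + 𝒫` obtained by integrating the first
profile equation from `z` to `+∞`. -/
theorem neg_logderiv_N_eq (s : ℝ) (hs : 0 < s) (N P : ℝ → ℝ)
    (hN : ContDiff ℝ 2 N) (hP : ContDiff ℝ 2 P)
    (hNpos : ∀ z : ℝ, 0 < N z)
    (hode : ∀ z : ℝ, -s * deriv N z - deriv (deriv N) z = deriv (fun u => P u * N u) z)
    (hNtop : Tendsto N atTop (nhds 0))
    (hdNtop : Tendsto (deriv N) atTop (nhds 0))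
    (hPbdd : ∃ Cb : ℝ, ∀ z : ℝ, |P z| ≤ Cb) :
    ∀ z : ℝ, -deriv N z / N z = s + P z := by
  set F : ℝ → ℝ := fun z => s * N z + deriv N z + P z * N z with hF
  have hdN : Differentiable ℝ N := hN.differentiable (by norm_num)
  have hdN' : Differentiable ℝ (deriv N) :=
    (hN.iterate_deriv' 1 1).differentiable (by norm_num)
  have hdP : Differentiable ℝ P := hP.differentiable (by norm_num)
  have hdPN : Differentiable ℝ (fun u => P u * N u) := hdP.mul hdN
  have hdF : Differentiable ℝ F := by
    exact ((differentiable_const s |>.mul hdN).add hdN').add hdPN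
  have hderivF : ∀ z, deriv F z = 0 := by
    intro z
    have e1 : DifferentiableAt ℝ (fun u => s * N u) z := (hdN z).const_mul s
    have e2 : DifferentiableAt ℝ (fun u => s * N u + deriv N u) z := e1.add (hdN' z)
    have h1 : deriv F z = s * deriv N z + deriv (deriv N) z + deriv (fun u => P u * N u) z := by
      rw [hF]
      rw [deriv_fun_add e2 (hdPN z), deriv_fun_add e1 (hdN' z), deriv_const_mul s (hdN z)]
    rw [h1, ← hode z]; ring
  have hconst : ∀ a b : ℝ, F a = F b := by
    intro a b
    exact is_const_of_deriv_eq_zero hdF hderivF a b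
  have hFtop : Tendsto F atTop (nhds 0) := by
    obtain ⟨Cb, hCb⟩ := hPbdd
    have h1 : Tendsto (fun z => s * N z) atTop (nhds 0) := by
      simpa using hNtop.const_mul s
    have h3 : Tendsto (fun z => P z * N z) atTop (nhds 0) := by
      have : Tendsto (fun z => |P z * N z|) atTop (nhds 0) := by
        have hub : Tendsto (fun z => Cb * |N z|) atTop (nhds 0) := by
          simpa using (hNtop.abs.const_mul Cb)
        apply squeeze_zero (fun z => abs_nonneg _) _ hub
        intro z
        rw [abs_mul]
        exact mul_le_mul_of_nonneg_right (hCb z) (abs_nonneg _)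
      exact (tendsto_zero_iff_abs_tendsto_zero _).2 this
    have := (h1.add hdNtop).add h3
    simpa using this
  have hF0 : ∀ z, F z = 0 := by
    intro z
    have : Tendsto (fun _ : ℝ => F z) atTop (nhds 0) := by
      have : (fun _ : ℝ => F z) = F := by
        funext a; exact hconst z a
      rw [this]; exact hFtop
    exact tendsto_nhds_unique tendsto_const_nhds this
  intro z
  have h := hF0 z
  have hNz := (hNpos z).ne'
  have h' : s * N z + deriv N z + P z * N z = 0 := h
  rw [div_eq_iff hNz]
  linear_combination -h'

end KSWave
end
end

section
/- Let s > 0, ε > 0, and let N, 𝒫 : ℝ → ℝ be twice continuously differentiable functions satisfying -s N' - N'' = (𝒫 N)' and -s 𝒫' - ε 𝒫'' = (N - ε 𝒫²)' on ℝ; set P(z) = (𝒫(z), 0). Let φ = (φ¹, φ²) : ℝ² × (0,∞) → ℝ² and ψ : ℝ² × (0,∞) → ℝ be smooth functions satisfying pointwise the perturbation system ∂ₜφ - s ∂_z φ - Δφ = N ∇ψ + (𝒫 ∇·φ, 0) + (∇·φ) ∇ψ and ∂ₜψ - s ∂_z ψ - ε Δψ = -2ε P·∇ψ - ε |∇ψ|²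 + ∇·φ, where derivatives act in the variables (z,y). Define n(x,y,t) = N(x - st) + (∇·φ)(x - st, y, t) and p(x,y,t) = P(x - st) + (∇ψ)(x - st, y, t). Then (n, p) satisfies pointwise the system ∂ₜn - Δn = ∇·(n p) and ∂ₜp - ε Δp = -2ε (p·∇)p + ∇n, where ((p·∇)p)ᵢ = Σ_{k=1,2} p_k ∂_k p_i. -/
open MeasureTheory Filter Topology

noncomputable section

namespace KSWave

-- ====== auxiliary API ======
abbrev E3 : Type := ℝ × ℝ × ℝ

/-- Uncurrying of a function of three real variables. -/
def UNC (f : ℝ → ℝ → ℝ → ℝ) : E3 → ℝ := fun q => f q.1 q.2.1 q.2.2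

/-- Directional (partial) derivative of a function on `ℝ × ℝ × ℝ`. -/
def pdv (v : E3) (F : E3 → ℝ) : E3 → ℝ := fun q => fderiv ℝ F q v

def ee1 : E3 := (1, 0, 0)
def ee2 : E3 := (0, 1, 0)
def ee3 : E3 := (0, 0, 1)

/-- Smoothness on the open half-space `{t > 0}`. -/
def SmoothPos (F : E3 → ℝ) : Prop := ∀ q : E3, 0 < q.2.2 → ContDiffAt ℝ (⊤ : ℕ∞) F q

theorem isOpen_pos : IsOpen {p : E3 | 0 < p.2.2} :=
  isOpen_lt continuous_const (continuous_snd.comp continuous_snd)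

theorem SmoothPos.diffAt {F : E3 → ℝ} (hF : SmoothPos F) {q : E3} (hq : 0 < q.2.2) :
    DifferentiableAt ℝ F q := (hF q hq).differentiableAt (by simp)

theorem SmoothPos.diffAt' {F : E3 → ℝ} (hF : SmoothPos F) (z y : ℝ) {t : ℝ} (ht : 0 < t) :
    DifferentiableAt ℝ F (z, y, t) := hF.diffAt (q := (z, y, t)) ht

theorem SmoothPos.fderivCD {F : E3 → ℝ} (hF : SmoothPos F) {q : E3} (hq : 0 < q.2.2) :
    ContDiffAt ℝ (⊤ : ℕ∞) (fderiv ℝ F) q := (hF q hq).fderiv_right (by simp)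

theorem SmoothPos.pdv {F : E3 → ℝ} (hF : SmoothPos F) (v : E3) : SmoothPos (pdv v F) :=
  fun q hq => (hF.fderivCD hq).clm_apply contDiffAt_const

theorem SmoothPos.add {F G : E3 → ℝ} (hF : SmoothPos F) (hG : SmoothPos G) :
    SmoothPos (fun q => F q + G q) := fun q hq => (hF q hq).add (hG q hq)

theorem hasDerivAt_z {F : E3 → ℝ} {z y t : ℝ} (hF : DifferentiableAt ℝ F (z, y, t)) :
    HasDerivAt (fun a => F (a, y, t)) (pdv ee1 F (z, y, t)) z := by
  have h := hF.hasFDerivAt.comp_hasDerivAt z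
    ((hasDerivAt_id z).prodMk (hasDerivAt_const z ((y, t) : ℝ × ℝ)))
  simpa [ee1, pdv, Function.comp_def, Prod.mk_zero_zero] using h

theorem hasDerivAt_y {F : E3 → ℝ} {z y t : ℝ} (hF : DifferentiableAt ℝ F (z, y, t)) :
    HasDerivAt (fun b => F (z, b, t)) (pdv ee2 F (z, y, t)) y := by
  have h := hF.hasFDerivAt.comp_hasDerivAt y
    ((hasDerivAt_const y z).prodMk ((hasDerivAt_id y).prodMk (hasDerivAt_const y t)))
  simpa [ee2, pdv, Function.comp_def] using h

theorem hasDerivAt_t {F : E3 → ℝ} {z y t : ℝ} (hF : DifferentiableAt ℝ F (z, y, t)) :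
    HasDerivAt (fun c => F (z, y, c)) (pdv ee3 F (z, y, t)) t := by
  have h := hF.hasFDerivAt.comp_hasDerivAt t
    ((hasDerivAt_const t z).prodMk ((hasDerivAt_const t y).prodMk (hasDerivAt_id t)))
  simpa [ee3, pdv, Function.comp_def] using h

theorem hasDerivAt_shift {F : E3 → ℝ} (s x : ℝ) {y t : ℝ}
    (hF : DifferentiableAt ℝ F (x - s * t, y, t)) :
    HasDerivAt (fun a => F (a - s * t, y, t)) (pdv ee1 F (x - s * t, y, t)) x := by
  simpa [Function.comp_def] using (hasDerivAt_z hF).comp x ((hasDerivAt_id x).sub_const (s * t))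

theorem hasDerivAt_shiftP {g : ℝ → ℝ} {d : ℝ} (x c : ℝ) (hg : HasDerivAt g d (x - c)) :
    HasDerivAt (fun a => g (a - c)) d x := by
  simpa [Function.comp_def] using hg.comp x ((hasDerivAt_id x).sub_const c)

theorem hasDerivAt_mv {F : E3 → ℝ} (s x : ℝ) {y t : ℝ}
    (hF : DifferentiableAt ℝ F (x - s * t, y, t)) :
    HasDerivAt (fun τ => F (x - s * τ, y, τ))
      (-s * pdv ee1 F (x - s * t, y, t) + pdv ee3 F (x - s * t, y, t)) t := by
  have h1 : HasDerivAt (fun τ : ℝ => x - s * τ) (-s) t := by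
    simpa using ((hasDerivAt_id t).const_mul s).const_sub x
  have hline : HasDerivAt (fun τ : ℝ => ((x - s * τ, y, τ) : E3)) ((-s, 0, 1) : E3) t :=
    h1.prodMk ((hasDerivAt_const t y).prodMk (hasDerivAt_id t))
  have h := hF.hasFDerivAt.comp_hasDerivAt t hline
  have hv : ((-s, 0, 1) : E3) = (-s) • ee1 + ee3 := by
    simp [ee1, ee3, Prod.ext_iff]
  rw [hv, map_add] at h
  simpa [pdv, smul_eq_mul, Function.comp_def] using h

theorem pdv_comm {F : E3 → ℝ} (hF : SmoothPos F) {q : E3} (hq : 0 < q.2.2) (v w : E3) :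
    pdv v (pdv w F) q = pdv w (pdv v F) q := by
  have hd : DifferentiableAt ℝ (fderiv ℝ F) q := (hF.fderivCD hq).differentiableAt (by simp)
  have hev : ∀ᶠ p in nhds q, HasFDerivAt F (fderiv ℝ F p) p := by
    filter_upwards [isOpen_pos.mem_nhds hq] with p hp
    exact (hF.diffAt hp).hasFDerivAt
  have hsym : ∀ a b : E3, fderiv ℝ (fderiv ℝ F) q a b = fderiv ℝ (fderiv ℝ F) q b a :=
    fun a b => second_derivative_symmetric_of_eventually hev hd.hasFDerivAt a b
  have key : ∀ a b : E3, pdv a (pdv b F) q = fderiv ℝ (fderiv ℝ F) q a b := by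
    intro a b
    have h2 : fderiv ℝ (fun p => fderiv ℝ F p b) q = (fderiv ℝ (fderiv ℝ F) q).flip b := by
      rw [fderiv_clm_apply hd (differentiableAt_const b)]
      simp
    show fderiv ℝ (fun p => fderiv ℝ F p b) q a = _
    rw [h2]
    rfl
  rw [key, key, hsym]

theorem pdv_comm' {F : E3 → ℝ} (hF : SmoothPos F) (z y : ℝ) {t : ℝ} (ht : 0 < t) (v w : E3) :
    pdv v (pdv w F) (z, y, t) = pdv w (pdv v F) (z, y, t) :=
  pdv_comm hF (q := (z, y, t)) ht v w

theorem pdv_congr {F G : E3 → ℝ} (h : ∀ p : E3, 0 < p.2.2 → F p = G p) {q : E3}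
    (hq : 0 < q.2.2) (v : E3) : pdv v F q = pdv v G q := by
  have hev : F =ᶠ[nhds q] G := by
    filter_upwards [isOpen_pos.mem_nhds hq] with p hp using h p hp
  simp only [pdv, hev.fderiv_eq]

theorem swap122' {F : E3 → ℝ} (hF : SmoothPos F) (z y : ℝ) {t : ℝ} (ht : 0 < t) :
    pdv ee1 (pdv ee2 (pdv ee2 F)) (z, y, t) = pdv ee2 (pdv ee2 (pdv ee1 F)) (z, y, t) := by
  rw [pdv_comm' (hF.pdv ee2) z y ht ee1 ee2]
  exact pdv_congr (fun p hp => pdv_comm hF hp ee1 ee2) (q := (z, y, t)) ht ee2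

theorem swap112' {F : E3 → ℝ} (hF : SmoothPos F) (z y : ℝ) {t : ℝ} (ht : 0 < t) :
    pdv ee1 (pdv ee1 (pdv ee2 F)) (z, y, t) = pdv ee2 (pdv ee1 (pdv ee1 F)) (z, y, t) := by
  have h1 : pdv ee1 (pdv ee1 (pdv ee2 F)) (z, y, t) = pdv ee1 (pdv ee2 (pdv ee1 F)) (z, y, t) :=
    pdv_congr (fun p hp => pdv_comm hF hp ee1 ee2) (q := (z, y, t)) ht ee1
  rw [h1, pdv_comm' (hF.pdv ee1) z y ht ee1 ee2]

theorem DZ_eq {f : ℝ → ℝ → ℝ → ℝ} (hF : SmoothPos (UNC f)) {z y t : ℝ} (ht : 0 < t) :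
    DZ f z y t = pdv ee1 (UNC f) (z, y, t) :=
  (hasDerivAt_z (hF.diffAt' z y ht)).deriv

theorem DY_eq {f : ℝ → ℝ → ℝ → ℝ} (hF : SmoothPos (UNC f)) {z y t : ℝ} (ht : 0 < t) :
    DY f z y t = pdv ee2 (UNC f) (z, y, t) :=
  (hasDerivAt_y (hF.diffAt' z y ht)).deriv

theorem DT_eq {f : ℝ → ℝ → ℝ → ℝ} (hF : SmoothPos (UNC f)) {z y t : ℝ} (ht : 0 < t) :
    DT f z y t = pdv ee3 (UNC f) (z, y, t) :=
  (hasDerivAt_t (hF.diffAt' z y ht)).deriv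

theorem LAP_eq {f : ℝ → ℝ → ℝ → ℝ} (hF : SmoothPos (UNC f)) {z y t : ℝ} (ht : 0 < t) :
    LAP f z y t = pdv ee1 (pdv ee1 (UNC f)) (z, y, t) + pdv ee2 (pdv ee2 (UNC f)) (z, y, t) := by
  have h1 : (fun a => DZ f a y t) = fun a => pdv ee1 (UNC f) (a, y, t) :=
    funext fun a => DZ_eq hF ht
  have h2 : (fun b => DY f z b t) = fun b => pdv ee2 (UNC f) (z, b, t) :=
    funext fun b => DY_eq hF ht
  show deriv (fun a => DZ f a y t) z + deriv (fun b => DY f z b t) y = _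
  rw [h1, h2, (hasDerivAt_z ((hF.pdv ee1).diffAt' z y ht)).deriv,
    (hasDerivAt_y ((hF.pdv ee2).diffAt' z y ht)).deriv]

theorem divphi_eq {φ1 φ2 : ℝ → ℝ → ℝ → ℝ} (hF1 : SmoothPos (UNC φ1))
    (hF2 : SmoothPos (UNC φ2)) {z y t : ℝ} (ht : 0 < t) :
    divphi φ1 φ2 z y t = pdv ee1 (UNC φ1) (z, y, t) + pdv ee2 (UNC φ2) (z, y, t) := by
  show DZ φ1 z y t + DY φ2 z y t = _
  rw [DZ_eq hF1 ht, DY_eq hF2 ht]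
-- ====== end auxiliary API ======


/-- if `(φ, ψ)` solves the perturbation system, then
`n = N(x-st) + (∇·φ)(x-st, y, t)`, `p = P(x-st) + (∇ψ)(x-st, y, t)` solves the
transformed Keller–Segel system. -/
theorem perturbation_reconstructs_np (s ε : ℝ) (hs : 0 < s) (hε : 0 < ε)
    (N P : ℝ → ℝ) (hN : ContDiff ℝ 2 N) (hP : ContDiff ℝ 2 P)
    (hodeN : ∀ z : ℝ, -s * deriv N z - deriv (deriv N) z = deriv (fun u => P u * N u) z)
    (hodeP : ∀ z : ℝ, -s * deriv P z - ε * deriv (deriv P) z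
        = deriv (fun u => N u - ε * (P u) ^ 2) z)
    (φ1 φ2 ψ : ℝ → ℝ → ℝ → ℝ)
    (hφ1 : ContDiffOn ℝ (⊤ : ℕ∞) (fun q : ℝ × ℝ × ℝ => φ1 q.1 q.2.1 q.2.2)
      (Set.univ ×ˢ Set.univ ×ˢ Set.Ioi 0))
    (hφ2 : ContDiffOn ℝ (⊤ : ℕ∞) (fun q : ℝ × ℝ × ℝ => φ2 q.1 q.2.1 q.2.2)
      (Set.univ ×ˢ Set.univ ×ˢ Set.Ioi 0))
    (hψ : ContDiffOn ℝ (⊤ : ℕ∞) (fun q : ℝ × ℝ × ℝ => ψ q.1 q.2.1 q.2.2)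
      (Set.univ ×ˢ Set.univ ×ˢ Set.Ioi 0))
    -- the perturbation system, pointwise for t > 0
    (heq_φ1 : ∀ z y t : ℝ, 0 < t →
      DT φ1 z y t - s * DZ φ1 z y t - LAP φ1 z y t
        = N z * DZ ψ z y t + P z * divphi φ1 φ2 z y t + divphi φ1 φ2 z y t * DZ ψ z y t)
    (heq_φ2 : ∀ z y t : ℝ, 0 < t →
      DT φ2 z y t - s * DZ φ2 z y t - LAP φ2 z y t
        = N z * DY ψ z y t + divphi φ1 φ2 z y t * DY ψ z y t)
    (heq_ψ : ∀ z y t : ℝ, 0 < t →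
      DT ψ z y t - s * DZ ψ z y t - ε * LAP ψ z y t
        = -(2 * ε) * (P z * DZ ψ z y t) - ε * ((DZ ψ z y t) ^ 2 + (DY ψ z y t) ^ 2)
          + divphi φ1 φ2 z y t) :
    ∀ n p1 p2 : ℝ → ℝ → ℝ → ℝ,
      n = (fun x y t => N (x - s * t) + divphi φ1 φ2 (x - s * t) y t) →
      p1 = (fun x y t => P (x - s * t) + DZ ψ (x - s * t) y t) →
      p2 = (fun x y t => DY ψ (x - s * t) y t) →
      ∀ x y t : ℝ, 0 < t → IsNPSolutionAt ε n p1 p2 x y t := by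
  intro n p1 p2 hn hp1 hp2 x y t ht
  have hopen : IsOpen ((Set.univ ×ˢ Set.univ ×ˢ Set.Ioi (0:ℝ)) : Set E3) :=
    isOpen_univ.prod (isOpen_univ.prod isOpen_Ioi)
  have hF1 : SmoothPos (UNC φ1) := fun q hq =>
    hφ1.contDiffAt (hopen.mem_nhds (by simp only [Set.mem_prod, Set.mem_univ, Set.mem_Ioi, true_and]; exact hq))
  have hF2 : SmoothPos (UNC φ2) := fun q hq =>
    hφ2.contDiffAt (hopen.mem_nhds (by simp only [Set.mem_prod, Set.mem_univ, Set.mem_Ioi, true_and]; exact hq))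
  have hG : SmoothPos (UNC ψ) := fun q hq =>
    hψ.contDiffAt (hopen.mem_nhds (by simp only [Set.mem_prod, Set.mem_univ, Set.mem_Ioi, true_and]; exact hq))
  have hNd : ∀ w : ℝ, HasDerivAt N (deriv N w) w := fun w =>
    ((hN.differentiable (by norm_num)) w).hasDerivAt
  have hPd : ∀ w : ℝ, HasDerivAt P (deriv P w) w := fun w =>
    ((hP.differentiable (by norm_num)) w).hasDerivAt
  have hNc1 : ContDiff ℝ 1 (deriv N) := by
    have h2 : ContDiff ℝ ((1 : WithTop ℕ∞) + 1) N := by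
      have he : ((1 : WithTop ℕ∞) + 1) = 2 := by norm_num
      rw [he]; exact hN
    exact (contDiff_succ_iff_deriv.mp h2).2.2
  have hPc1 : ContDiff ℝ 1 (deriv P) := by
    have h2 : ContDiff ℝ ((1 : WithTop ℕ∞) + 1) P := by
      have he : ((1 : WithTop ℕ∞) + 1) = 2 := by norm_num
      rw [he]; exact hP
    exact (contDiff_succ_iff_deriv.mp h2).2.2
  have hNd2 : ∀ w : ℝ, HasDerivAt (deriv N) (deriv (deriv N) w) w := fun w =>
    ((hNc1.differentiable one_ne_zero) w).hasDerivAt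
  have hPd2 : ∀ w : ℝ, HasDerivAt (deriv P) (deriv (deriv P) w) w := fun w =>
    ((hPc1.differentiable one_ne_zero) w).hasDerivAt
  have hmv0 : HasDerivAt (fun τ : ℝ => x - s * τ) (-s) t := by
    simpa using ((hasDerivAt_id t).const_mul s).const_sub x
  have eqc1 : ∀ z' y' t' : ℝ, 0 < t' →
      pdv ee3 (UNC φ1) (z', y', t') - s * pdv ee1 (UNC φ1) (z', y', t')
        - (pdv ee1 (pdv ee1 (UNC φ1)) (z', y', t') + pdv ee2 (pdv ee2 (UNC φ1)) (z', y', t'))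
      = N z' * pdv ee1 (UNC ψ) (z', y', t')
        + P z' * (pdv ee1 (UNC φ1) (z', y', t') + pdv ee2 (UNC φ2) (z', y', t'))
        + (pdv ee1 (UNC φ1) (z', y', t') + pdv ee2 (UNC φ2) (z', y', t')) * pdv ee1 (UNC ψ) (z', y', t') := by
    intro z' y' t' ht'
    have h := heq_φ1 z' y' t' ht'
    rw [DT_eq hF1 ht', LAP_eq hF1 ht', DZ_eq hF1 ht', DZ_eq hG ht', divphi_eq hF1 hF2 ht'] at h
    exact h
  have eqc2 : ∀ z' y' t' : ℝ, 0 < t' →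
      pdv ee3 (UNC φ2) (z', y', t') - s * pdv ee1 (UNC φ2) (z', y', t')
        - (pdv ee1 (pdv ee1 (UNC φ2)) (z', y', t') + pdv ee2 (pdv ee2 (UNC φ2)) (z', y', t'))
      = N z' * pdv ee2 (UNC ψ) (z', y', t')
        + (pdv ee1 (UNC φ1) (z', y', t') + pdv ee2 (UNC φ2) (z', y', t')) * pdv ee2 (UNC ψ) (z', y', t') := by
    intro z' y' t' ht'
    have h := heq_φ2 z' y' t' ht'
    rw [DT_eq hF2 ht', LAP_eq hF2 ht', DZ_eq hF2 ht', DY_eq hG ht', divphi_eq hF1 hF2 ht'] at h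
    exact h
  have eqc3 : ∀ z' y' t' : ℝ, 0 < t' →
      pdv ee3 (UNC ψ) (z', y', t') - s * pdv ee1 (UNC ψ) (z', y', t')
        - ε * (pdv ee1 (pdv ee1 (UNC ψ)) (z', y', t') + pdv ee2 (pdv ee2 (UNC ψ)) (z', y', t'))
      = -(2 * ε) * (P z' * pdv ee1 (UNC ψ) (z', y', t'))
        - ε * (pdv ee1 (UNC ψ) (z', y', t') ^ 2 + pdv ee2 (UNC ψ) (z', y', t') ^ 2)
        + (pdv ee1 (UNC φ1) (z', y', t') + pdv ee2 (UNC φ2) (z', y', t')) := by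
    intro z' y' t' ht'
    have h := heq_ψ z' y' t' ht'
    rw [DT_eq hG ht', LAP_eq hG ht', DZ_eq hG ht', DY_eq hG ht', divphi_eq hF1 hF2 ht'] at h
    exact h
  have hodeNz : -s * deriv N (x - s * t) - deriv (deriv N) (x - s * t) = deriv P (x - s * t) * N (x - s * t) + P (x - s * t) * deriv N (x - s * t) :=
    (hodeN (x - s * t)).trans (((hPd (x - s * t)).mul (hNd (x - s * t))).deriv)
  have hodePz : -s * deriv P (x - s * t) - ε * deriv (deriv P) (x - s * t) = deriv N (x - s * t) - ε * (2 * P (x - s * t) * deriv P (x - s * t)) := by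
    have h := (hodeP (x - s * t)).trans
      (((hNd (x - s * t)).sub (HasDerivAt.const_mul ε ((hPd (x - s * t)).pow 2))).deriv)
    norm_num at h
    linear_combination h
  have hfnZ : (fun a => n a y t)
      = (fun a => N (a - s * t) + (pdv ee1 (UNC φ1) (a - s * t, y, t) + pdv ee2 (UNC φ2) (a - s * t, y, t))) := by
    funext a
    rw [hn]
    show N (a - s * t) + divphi φ1 φ2 (a - s * t) y t = _
    rw [divphi_eq hF1 hF2 ht]
  have n0 : n x y t = N (x - s * t) + (pdv ee1 (UNC φ1) (x - s * t, y, t) + pdv ee2 (UNC φ2) (x - s * t, y, t)) := by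
    rw [hn]
    show N (x - s * t) + divphi φ1 φ2 (x - s * t) y t = _
    rw [divphi_eq hF1 hF2 ht]
  have hn_hdZ : HasDerivAt (fun a => n a y t) (deriv N (x - s * t) + (pdv ee1 (pdv ee1 (UNC φ1)) (x - s * t, y, t) + pdv ee1 (pdv ee2 (UNC φ2)) (x - s * t, y, t))) x := by
    rw [hfnZ]
    exact (hasDerivAt_shiftP x (s * t) (hNd (x - s * t))).add ((hasDerivAt_shift s x ((hF1.pdv ee1).diffAt' (x - s * t) y ht)).add (hasDerivAt_shift s x ((hF2.pdv ee2).diffAt' (x - s * t) y ht)))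
  have hnZ : ∀ a : ℝ, DZ n a y t = deriv N (a - s * t)
      + (pdv ee1 (pdv ee1 (UNC φ1)) (a - s * t, y, t) + pdv ee1 (pdv ee2 (UNC φ2)) (a - s * t, y, t)) := by
    intro a
    show deriv (fun a' => n a' y t) a = _
    rw [hfnZ]
    exact ((hasDerivAt_shiftP a (s * t) (hNd (a - s * t))).add
      ((hasDerivAt_shift s a ((hF1.pdv ee1).diffAt' (a - s * t) y ht)).add
        (hasDerivAt_shift s a ((hF2.pdv ee2).diffAt' (a - s * t) y ht)))).deriv
  have hnZZ : DZ (DZ n) x y t = deriv (deriv N) (x - s * t) + (pdv ee1 (pdv ee1 (pdv ee1 (UNC φ1))) (x - s * t, y, t) + pdv ee1 (pdv ee1 (pdv ee2 (UNC φ2))) (x - s * t, y, t)) := by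
    show deriv (fun a => DZ n a y t) x = _
    rw [funext hnZ]
    exact ((hasDerivAt_shiftP x (s * t) (hNd2 (x - s * t))).add
      ((hasDerivAt_shift s x (((hF1.pdv ee1).pdv ee1).diffAt' (x - s * t) y ht)).add (hasDerivAt_shift s x (((hF2.pdv ee2).pdv ee1).diffAt' (x - s * t) y ht)))).deriv
  have hfnY : (fun b => n x b t)
      = (fun b => N (x - s * t) + (pdv ee1 (UNC φ1) (x - s * t, b, t) + pdv ee2 (UNC φ2) (x - s * t, b, t))) := by
    funext b
    rw [hn]
    show N (x - s * t) + divphi φ1 φ2 (x - s * t) b t = _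
    rw [divphi_eq hF1 hF2 ht]
  have hn_hdY : HasDerivAt (fun b => n x b t) (pdv ee2 (pdv ee1 (UNC φ1)) (x - s * t, y, t) + pdv ee2 (pdv ee2 (UNC φ2)) (x - s * t, y, t)) y := by
    rw [hfnY]
    exact HasDerivAt.const_add (N (x - s * t)) ((hasDerivAt_y ((hF1.pdv ee1).diffAt' (x - s * t) y ht)).add (hasDerivAt_y ((hF2.pdv ee2).diffAt' (x - s * t) y ht)))
  have hnY : ∀ b : ℝ, DY n x b t
      = pdv ee2 (pdv ee1 (UNC φ1)) (x - s * t, b, t) + pdv ee2 (pdv ee2 (UNC φ2)) (x - s * t, b, t) := by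
    intro b
    show deriv (fun b' => n x b' t) b = _
    rw [hfnY]
    exact (HasDerivAt.const_add (N (x - s * t))
      ((hasDerivAt_y ((hF1.pdv ee1).diffAt' (x - s * t) b ht)).add
        (hasDerivAt_y ((hF2.pdv ee2).diffAt' (x - s * t) b ht)))).deriv
  have hnYY : DY (DY n) x y t = pdv ee2 (pdv ee2 (pdv ee1 (UNC φ1))) (x - s * t, y, t) + pdv ee2 (pdv ee2 (pdv ee2 (UNC φ2))) (x - s * t, y, t) := by
    show deriv (fun b => DY n x b t) y = _
    rw [funext hnY]
    exact ((hasDerivAt_y (((hF1.pdv ee1).pdv ee2).diffAt' (x - s * t) y ht)).add (hasDerivAt_y (((hF2.pdv ee2).pdv ee2).diffAt' (x - s * t) y ht))).deriv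
  have hnT : DT n x y t = deriv N (x - s * t) * -s + ((-s * pdv ee1 (pdv ee1 (UNC φ1)) (x - s * t, y, t) + pdv ee3 (pdv ee1 (UNC φ1)) (x - s * t, y, t)) + (-s * pdv ee1 (pdv ee2 (UNC φ2)) (x - s * t, y, t) + pdv ee3 (pdv ee2 (UNC φ2)) (x - s * t, y, t))) := by
    have hev : (fun τ => n x y τ) =ᶠ[nhds t]
        (fun τ => N (x - s * τ) + (pdv ee1 (UNC φ1) (x - s * τ, y, τ) + pdv ee2 (UNC φ2) (x - s * τ, y, τ))) := by
      filter_upwards [Ioi_mem_nhds ht] with τ hτ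
      rw [hn]
      show N (x - s * τ) + divphi φ1 φ2 (x - s * τ) y τ = _
      rw [divphi_eq hF1 hF2 hτ]
    show deriv (fun τ => n x y τ) t = _
    rw [hev.deriv_eq]
    exact (((hNd (x - s * t)).comp t hmv0).add ((hasDerivAt_mv s x ((hF1.pdv ee1).diffAt' (x - s * t) y ht)).add (hasDerivAt_mv s x ((hF2.pdv ee2).diffAt' (x - s * t) y ht)))).deriv
  have hfp1Z : (fun a => p1 a y t) = (fun a => P (a - s * t) + pdv ee1 (UNC ψ) (a - s * t, y, t)) := by
    funext a
    rw [hp1]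
    show P (a - s * t) + DZ ψ (a - s * t) y t = _
    rw [DZ_eq hG ht]
  have p10 : p1 x y t = P (x - s * t) + pdv ee1 (UNC ψ) (x - s * t, y, t) := by
    rw [hp1]
    show P (x - s * t) + DZ ψ (x - s * t) y t = _
    rw [DZ_eq hG ht]
  have hp1_hdZ : HasDerivAt (fun a => p1 a y t) (deriv P (x - s * t) + pdv ee1 (pdv ee1 (UNC ψ)) (x - s * t, y, t)) x := by
    rw [hfp1Z]
    exact (hasDerivAt_shiftP x (s * t) (hPd (x - s * t))).add (hasDerivAt_shift s x ((hG.pdv ee1).diffAt' (x - s * t) y ht))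
  have hp1Z : ∀ a : ℝ, DZ p1 a y t = deriv P (a - s * t) + pdv ee1 (pdv ee1 (UNC ψ)) (a - s * t, y, t) := by
    intro a
    show deriv (fun a' => p1 a' y t) a = _
    rw [hfp1Z]
    exact ((hasDerivAt_shiftP a (s * t) (hPd (a - s * t))).add
      (hasDerivAt_shift s a ((hG.pdv ee1).diffAt' (a - s * t) y ht))).deriv
  have hp1ZZ : DZ (DZ p1) x y t = deriv (deriv P) (x - s * t) + pdv ee1 (pdv ee1 (pdv ee1 (UNC ψ))) (x - s * t, y, t) := by
    show deriv (fun a => DZ p1 a y t) x = _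
    rw [funext hp1Z]
    exact ((hasDerivAt_shiftP x (s * t) (hPd2 (x - s * t))).add (hasDerivAt_shift s x (((hG.pdv ee1).pdv ee1).diffAt' (x - s * t) y ht))).deriv
  have hfp1Y : (fun b => p1 x b t) = (fun b => P (x - s * t) + pdv ee1 (UNC ψ) (x - s * t, b, t)) := by
    funext b
    rw [hp1]
    show P (x - s * t) + DZ ψ (x - s * t) b t = _
    rw [DZ_eq hG ht]
  have hp1Y : ∀ b : ℝ, DY p1 x b t = pdv ee2 (pdv ee1 (UNC ψ)) (x - s * t, b, t) := by
    intro b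
    show deriv (fun b' => p1 x b' t) b = _
    rw [hfp1Y]
    exact (HasDerivAt.const_add (P (x - s * t)) (hasDerivAt_y ((hG.pdv ee1).diffAt' (x - s * t) b ht))).deriv
  have hp1YY : DY (DY p1) x y t = pdv ee2 (pdv ee2 (pdv ee1 (UNC ψ))) (x - s * t, y, t) := by
    show deriv (fun b => DY p1 x b t) y = _
    rw [funext hp1Y]
    exact (hasDerivAt_y (((hG.pdv ee1).pdv ee2).diffAt' (x - s * t) y ht)).deriv
  have hp1T : DT p1 x y t = deriv P (x - s * t) * -s + (-s * pdv ee1 (pdv ee1 (UNC ψ)) (x - s * t, y, t) + pdv ee3 (pdv ee1 (UNC ψ)) (x - s * t, y, t)) := by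
    have hev : (fun τ => p1 x y τ) =ᶠ[nhds t]
        (fun τ => P (x - s * τ) + pdv ee1 (UNC ψ) (x - s * τ, y, τ)) := by
      filter_upwards [Ioi_mem_nhds ht] with τ hτ
      rw [hp1]
      show P (x - s * τ) + DZ ψ (x - s * τ) y τ = _
      rw [DZ_eq hG hτ]
    show deriv (fun τ => p1 x y τ) t = _
    rw [hev.deriv_eq]
    exact (((hPd (x - s * t)).comp t hmv0).add (hasDerivAt_mv s x ((hG.pdv ee1).diffAt' (x - s * t) y ht))).deriv
  have hfp2Z : (fun a => p2 a y t) = (fun a => pdv ee2 (UNC ψ) (a - s * t, y, t)) := by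
    funext a
    rw [hp2]
    show DY ψ (a - s * t) y t = _
    rw [DY_eq hG ht]
  have p20 : p2 x y t = pdv ee2 (UNC ψ) (x - s * t, y, t) := by
    rw [hp2]
    show DY ψ (x - s * t) y t = _
    rw [DY_eq hG ht]
  have hp2Z : ∀ a : ℝ, DZ p2 a y t = pdv ee1 (pdv ee2 (UNC ψ)) (a - s * t, y, t) := by
    intro a
    show deriv (fun a' => p2 a' y t) a = _
    rw [hfp2Z]
    exact (hasDerivAt_shift s a ((hG.pdv ee2).diffAt' (a - s * t) y ht)).deriv
  have hp2ZZ : DZ (DZ p2) x y t = pdv ee1 (pdv ee1 (pdv ee2 (UNC ψ))) (x - s * t, y, t) := by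
    show deriv (fun a => DZ p2 a y t) x = _
    rw [funext hp2Z]
    exact (hasDerivAt_shift s x (((hG.pdv ee2).pdv ee1).diffAt' (x - s * t) y ht)).deriv
  have hfp2Y : (fun b => p2 x b t) = (fun b => pdv ee2 (UNC ψ) (x - s * t, b, t)) := by
    funext b
    rw [hp2]
    show DY ψ (x - s * t) b t = _
    rw [DY_eq hG ht]
  have hp2_hdY : HasDerivAt (fun b => p2 x b t) (pdv ee2 (pdv ee2 (UNC ψ)) (x - s * t, y, t)) y := by
    rw [hfp2Y]
    exact (hasDerivAt_y ((hG.pdv ee2).diffAt' (x - s * t) y ht))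
  have hp2Y : ∀ b : ℝ, DY p2 x b t = pdv ee2 (pdv ee2 (UNC ψ)) (x - s * t, b, t) := by
    intro b
    show deriv (fun b' => p2 x b' t) b = _
    rw [hfp2Y]
    exact (hasDerivAt_y ((hG.pdv ee2).diffAt' (x - s * t) b ht)).deriv
  have hp2YY : DY (DY p2) x y t = pdv ee2 (pdv ee2 (pdv ee2 (UNC ψ))) (x - s * t, y, t) := by
    show deriv (fun b => DY p2 x b t) y = _
    rw [funext hp2Y]
    exact (hasDerivAt_y (((hG.pdv ee2).pdv ee2).diffAt' (x - s * t) y ht)).deriv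
  have hp2T : DT p2 x y t = -s * pdv ee1 (pdv ee2 (UNC ψ)) (x - s * t, y, t) + pdv ee3 (pdv ee2 (UNC ψ)) (x - s * t, y, t) := by
    have hev : (fun τ => p2 x y τ) =ᶠ[nhds t] (fun τ => pdv ee2 (UNC ψ) (x - s * τ, y, τ)) := by
      filter_upwards [Ioi_mem_nhds ht] with τ hτ
      rw [hp2]
      show DY ψ (x - s * τ) y τ = _
      rw [DY_eq hG hτ]
    show deriv (fun τ => p2 x y τ) t = _
    rw [hev.deriv_eq]
    exact (hasDerivAt_mv s x ((hG.pdv ee2).diffAt' (x - s * t) y ht)).deriv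
  have hprodZ : DZ (fun a b c => n a b c * p1 a b c) x y t
      = (deriv N (x - s * t) + (pdv ee1 (pdv ee1 (UNC φ1)) (x - s * t, y, t) + pdv ee1 (pdv ee2 (UNC φ2)) (x - s * t, y, t))) * p1 x y t + n x y t * (deriv P (x - s * t) + pdv ee1 (pdv ee1 (UNC ψ)) (x - s * t, y, t)) := by
    show deriv (fun a => n a y t * p1 a y t) x = _
    exact (hn_hdZ.mul hp1_hdZ).deriv
  have hprodY : DY (fun a b c => n a b c * p2 a b c) x y t
      = (pdv ee2 (pdv ee1 (UNC φ1)) (x - s * t, y, t) + pdv ee2 (pdv ee2 (UNC φ2)) (x - s * t, y, t)) * p2 x y t + n x y t * (pdv ee2 (pdv ee2 (UNC ψ)) (x - s * t, y, t)) := by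
    show deriv (fun b => n x b t * p2 x b t) y = _
    exact (hn_hdY.mul hp2_hdY).deriv
  have hL1 : HasDerivAt (fun a => pdv ee3 (UNC φ1) (a, y, t) - s * pdv ee1 (UNC φ1) (a, y, t)
        - (pdv ee1 (pdv ee1 (UNC φ1)) (a, y, t) + pdv ee2 (pdv ee2 (UNC φ1)) (a, y, t)))
      (pdv ee1 (pdv ee3 (UNC φ1)) (x - s * t, y, t) - s * pdv ee1 (pdv ee1 (UNC φ1)) (x - s * t, y, t) - (pdv ee1 (pdv ee1 (pdv ee1 (UNC φ1))) (x - s * t, y, t) + pdv ee1 (pdv ee2 (pdv ee2 (UNC φ1))) (x - s * t, y, t))) (x - s * t) :=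
    ((hasDerivAt_z ((hF1.pdv ee3).diffAt' (x - s * t) y ht)).sub (HasDerivAt.const_mul s (hasDerivAt_z ((hF1.pdv ee1).diffAt' (x - s * t) y ht)))).sub
      ((hasDerivAt_z (((hF1.pdv ee1).pdv ee1).diffAt' (x - s * t) y ht)).add (hasDerivAt_z (((hF1.pdv ee2).pdv ee2).diffAt' (x - s * t) y ht)))
  have hR1 : HasDerivAt (fun a => N a * pdv ee1 (UNC ψ) (a, y, t)
        + P a * (pdv ee1 (UNC φ1) (a, y, t) + pdv ee2 (UNC φ2) (a, y, t))
        + (pdv ee1 (UNC φ1) (a, y, t) + pdv ee2 (UNC φ2) (a, y, t)) * pdv ee1 (UNC ψ) (a, y, t))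
      ((deriv N (x - s * t) * pdv ee1 (UNC ψ) (x - s * t, y, t) + N (x - s * t) * pdv ee1 (pdv ee1 (UNC ψ)) (x - s * t, y, t))
        + (deriv P (x - s * t) * (pdv ee1 (UNC φ1) (x - s * t, y, t) + pdv ee2 (UNC φ2) (x - s * t, y, t)) + P (x - s * t) * (pdv ee1 (pdv ee1 (UNC φ1)) (x - s * t, y, t) + pdv ee1 (pdv ee2 (UNC φ2)) (x - s * t, y, t)))
        + ((pdv ee1 (pdv ee1 (UNC φ1)) (x - s * t, y, t) + pdv ee1 (pdv ee2 (UNC φ2)) (x - s * t, y, t)) * pdv ee1 (UNC ψ) (x - s * t, y, t) + (pdv ee1 (UNC φ1) (x - s * t, y, t) + pdv ee2 (UNC φ2) (x - s * t, y, t)) * pdv ee1 (pdv ee1 (UNC ψ)) (x - s * t, y, t))) (x - s * t) :=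
    (((hNd (x - s * t)).mul (hasDerivAt_z ((hG.pdv ee1).diffAt' (x - s * t) y ht))).add
      ((hPd (x - s * t)).mul ((hasDerivAt_z ((hF1.pdv ee1).diffAt' (x - s * t) y ht)).add (hasDerivAt_z ((hF2.pdv ee2).diffAt' (x - s * t) y ht))))).add
      (((hasDerivAt_z ((hF1.pdv ee1).diffAt' (x - s * t) y ht)).add (hasDerivAt_z ((hF2.pdv ee2).diffAt' (x - s * t) y ht))).mul (hasDerivAt_z ((hG.pdv ee1).diffAt' (x - s * t) y ht)))
  have d1eq1 : pdv ee1 (pdv ee3 (UNC φ1)) (x - s * t, y, t) - s * pdv ee1 (pdv ee1 (UNC φ1)) (x - s * t, y, t) - (pdv ee1 (pdv ee1 (pdv ee1 (UNC φ1))) (x - s * t, y, t) + pdv ee1 (pdv ee2 (pdv ee2 (UNC φ1))) (x - s * t, y, t))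
      = (deriv N (x - s * t) * pdv ee1 (UNC ψ) (x - s * t, y, t) + N (x - s * t) * pdv ee1 (pdv ee1 (UNC ψ)) (x - s * t, y, t))
        + (deriv P (x - s * t) * (pdv ee1 (UNC φ1) (x - s * t, y, t) + pdv ee2 (UNC φ2) (x - s * t, y, t)) + P (x - s * t) * (pdv ee1 (pdv ee1 (UNC φ1)) (x - s * t, y, t) + pdv ee1 (pdv ee2 (UNC φ2)) (x - s * t, y, t)))
        + ((pdv ee1 (pdv ee1 (UNC φ1)) (x - s * t, y, t) + pdv ee1 (pdv ee2 (UNC φ2)) (x - s * t, y, t)) * pdv ee1 (UNC ψ) (x - s * t, y, t) + (pdv ee1 (UNC φ1) (x - s * t, y, t) + pdv ee2 (UNC φ2) (x - s * t, y, t)) * pdv ee1 (pdv ee1 (UNC ψ)) (x - s * t, y, t)) := by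
    have hfe : (fun a => pdv ee3 (UNC φ1) (a, y, t) - s * pdv ee1 (UNC φ1) (a, y, t)
        - (pdv ee1 (pdv ee1 (UNC φ1)) (a, y, t) + pdv ee2 (pdv ee2 (UNC φ1)) (a, y, t)))
        = (fun a => N a * pdv ee1 (UNC ψ) (a, y, t)
        + P a * (pdv ee1 (UNC φ1) (a, y, t) + pdv ee2 (UNC φ2) (a, y, t))
        + (pdv ee1 (UNC φ1) (a, y, t) + pdv ee2 (UNC φ2) (a, y, t)) * pdv ee1 (UNC ψ) (a, y, t)) :=
      funext fun a => eqc1 a y t ht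
    rw [hfe] at hL1
    exact hL1.unique hR1
  have hL2 : HasDerivAt (fun b => pdv ee3 (UNC φ2) (x - s * t, b, t) - s * pdv ee1 (UNC φ2) (x - s * t, b, t)
        - (pdv ee1 (pdv ee1 (UNC φ2)) (x - s * t, b, t) + pdv ee2 (pdv ee2 (UNC φ2)) (x - s * t, b, t)))
      (pdv ee2 (pdv ee3 (UNC φ2)) (x - s * t, y, t) - s * pdv ee2 (pdv ee1 (UNC φ2)) (x - s * t, y, t) - (pdv ee2 (pdv ee1 (pdv ee1 (UNC φ2))) (x - s * t, y, t) + pdv ee2 (pdv ee2 (pdv ee2 (UNC φ2))) (x - s * t, y, t))) y :=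
    ((hasDerivAt_y ((hF2.pdv ee3).diffAt' (x - s * t) y ht)).sub (HasDerivAt.const_mul s (hasDerivAt_y ((hF2.pdv ee1).diffAt' (x - s * t) y ht)))).sub
      ((hasDerivAt_y (((hF2.pdv ee1).pdv ee1).diffAt' (x - s * t) y ht)).add (hasDerivAt_y (((hF2.pdv ee2).pdv ee2).diffAt' (x - s * t) y ht)))
  have hR2 : HasDerivAt (fun b => N (x - s * t) * pdv ee2 (UNC ψ) (x - s * t, b, t)
        + (pdv ee1 (UNC φ1) (x - s * t, b, t) + pdv ee2 (UNC φ2) (x - s * t, b, t)) * pdv ee2 (UNC ψ) (x - s * t, b, t))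
      (N (x - s * t) * pdv ee2 (pdv ee2 (UNC ψ)) (x - s * t, y, t) + ((pdv ee2 (pdv ee1 (UNC φ1)) (x - s * t, y, t) + pdv ee2 (pdv ee2 (UNC φ2)) (x - s * t, y, t)) * pdv ee2 (UNC ψ) (x - s * t, y, t) + (pdv ee1 (UNC φ1) (x - s * t, y, t) + pdv ee2 (UNC φ2) (x - s * t, y, t)) * pdv ee2 (pdv ee2 (UNC ψ)) (x - s * t, y, t))) y :=
    (HasDerivAt.const_mul (N (x - s * t)) (hasDerivAt_y ((hG.pdv ee2).diffAt' (x - s * t) y ht))).add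
      (((hasDerivAt_y ((hF1.pdv ee1).diffAt' (x - s * t) y ht)).add (hasDerivAt_y ((hF2.pdv ee2).diffAt' (x - s * t) y ht))).mul (hasDerivAt_y ((hG.pdv ee2).diffAt' (x - s * t) y ht)))
  have d2eq2 : pdv ee2 (pdv ee3 (UNC φ2)) (x - s * t, y, t) - s * pdv ee2 (pdv ee1 (UNC φ2)) (x - s * t, y, t) - (pdv ee2 (pdv ee1 (pdv ee1 (UNC φ2))) (x - s * t, y, t) + pdv ee2 (pdv ee2 (pdv ee2 (UNC φ2))) (x - s * t, y, t))
      = N (x - s * t) * pdv ee2 (pdv ee2 (UNC ψ)) (x - s * t, y, t) + ((pdv ee2 (pdv ee1 (UNC φ1)) (x - s * t, y, t) + pdv ee2 (pdv ee2 (UNC φ2)) (x - s * t, y, t)) * pdv ee2 (UNC ψ) (x - s * t, y, t) + (pdv ee1 (UNC φ1) (x - s * t, y, t) + pdv ee2 (UNC φ2) (x - s * t, y, t)) * pdv ee2 (pdv ee2 (UNC ψ)) (x - s * t, y, t)) := by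
    have hfe : (fun b => pdv ee3 (UNC φ2) (x - s * t, b, t) - s * pdv ee1 (UNC φ2) (x - s * t, b, t)
        - (pdv ee1 (pdv ee1 (UNC φ2)) (x - s * t, b, t) + pdv ee2 (pdv ee2 (UNC φ2)) (x - s * t, b, t)))
        = (fun b => N (x - s * t) * pdv ee2 (UNC ψ) (x - s * t, b, t)
        + (pdv ee1 (UNC φ1) (x - s * t, b, t) + pdv ee2 (UNC φ2) (x - s * t, b, t)) * pdv ee2 (UNC ψ) (x - s * t, b, t)) :=
      funext fun b => eqc2 (x - s * t) b t ht
    rw [hfe] at hL2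
    exact hL2.unique hR2
  have hL3 : HasDerivAt (fun a => pdv ee3 (UNC ψ) (a, y, t) - s * pdv ee1 (UNC ψ) (a, y, t)
        - ε * (pdv ee1 (pdv ee1 (UNC ψ)) (a, y, t) + pdv ee2 (pdv ee2 (UNC ψ)) (a, y, t)))
      (pdv ee1 (pdv ee3 (UNC ψ)) (x - s * t, y, t) - s * pdv ee1 (pdv ee1 (UNC ψ)) (x - s * t, y, t) - ε * (pdv ee1 (pdv ee1 (pdv ee1 (UNC ψ))) (x - s * t, y, t) + pdv ee1 (pdv ee2 (pdv ee2 (UNC ψ))) (x - s * t, y, t))) (x - s * t) :=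
    ((hasDerivAt_z ((hG.pdv ee3).diffAt' (x - s * t) y ht)).sub (HasDerivAt.const_mul s (hasDerivAt_z ((hG.pdv ee1).diffAt' (x - s * t) y ht)))).sub
      (HasDerivAt.const_mul ε ((hasDerivAt_z (((hG.pdv ee1).pdv ee1).diffAt' (x - s * t) y ht)).add (hasDerivAt_z (((hG.pdv ee2).pdv ee2).diffAt' (x - s * t) y ht))))
  have hR3 : HasDerivAt (fun a => -(2 * ε) * (P a * pdv ee1 (UNC ψ) (a, y, t))
        - ε * (pdv ee1 (UNC ψ) (a, y, t) ^ 2 + pdv ee2 (UNC ψ) (a, y, t) ^ 2)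
        + (pdv ee1 (UNC φ1) (a, y, t) + pdv ee2 (UNC φ2) (a, y, t)))
      (-(2 * ε) * (deriv P (x - s * t) * pdv ee1 (UNC ψ) (x - s * t, y, t) + P (x - s * t) * pdv ee1 (pdv ee1 (UNC ψ)) (x - s * t, y, t))
        - ε * ((2 : ℕ) * pdv ee1 (UNC ψ) (x - s * t, y, t) ^ (2 - 1) * pdv ee1 (pdv ee1 (UNC ψ)) (x - s * t, y, t) + (2 : ℕ) * pdv ee2 (UNC ψ) (x - s * t, y, t) ^ (2 - 1) * pdv ee1 (pdv ee2 (UNC ψ)) (x - s * t, y, t))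
        + (pdv ee1 (pdv ee1 (UNC φ1)) (x - s * t, y, t) + pdv ee1 (pdv ee2 (UNC φ2)) (x - s * t, y, t))) (x - s * t) :=
    ((HasDerivAt.const_mul (-(2 * ε)) ((hPd (x - s * t)).mul (hasDerivAt_z ((hG.pdv ee1).diffAt' (x - s * t) y ht)))).sub
      (HasDerivAt.const_mul ε (((hasDerivAt_z ((hG.pdv ee1).diffAt' (x - s * t) y ht)).pow 2).add ((hasDerivAt_z ((hG.pdv ee2).diffAt' (x - s * t) y ht)).pow 2)))).add
      ((hasDerivAt_z ((hF1.pdv ee1).diffAt' (x - s * t) y ht)).add (hasDerivAt_z ((hF2.pdv ee2).diffAt' (x - s * t) y ht)))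
  have d1eq3 : pdv ee1 (pdv ee3 (UNC ψ)) (x - s * t, y, t) - s * pdv ee1 (pdv ee1 (UNC ψ)) (x - s * t, y, t) - ε * (pdv ee1 (pdv ee1 (pdv ee1 (UNC ψ))) (x - s * t, y, t) + pdv ee1 (pdv ee2 (pdv ee2 (UNC ψ))) (x - s * t, y, t))
      = -(2 * ε) * (deriv P (x - s * t) * pdv ee1 (UNC ψ) (x - s * t, y, t) + P (x - s * t) * pdv ee1 (pdv ee1 (UNC ψ)) (x - s * t, y, t))
        - ε * ((2 : ℕ) * pdv ee1 (UNC ψ) (x - s * t, y, t) ^ (2 - 1) * pdv ee1 (pdv ee1 (UNC ψ)) (x - s * t, y, t) + (2 : ℕ) * pdv ee2 (UNC ψ) (x - s * t, y, t) ^ (2 - 1) * pdv ee1 (pdv ee2 (UNC ψ)) (x - s * t, y, t))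
        + (pdv ee1 (pdv ee1 (UNC φ1)) (x - s * t, y, t) + pdv ee1 (pdv ee2 (UNC φ2)) (x - s * t, y, t)) := by
    have hfe : (fun a => pdv ee3 (UNC ψ) (a, y, t) - s * pdv ee1 (UNC ψ) (a, y, t)
        - ε * (pdv ee1 (pdv ee1 (UNC ψ)) (a, y, t) + pdv ee2 (pdv ee2 (UNC ψ)) (a, y, t)))
        = (fun a => -(2 * ε) * (P a * pdv ee1 (UNC ψ) (a, y, t))
        - ε * (pdv ee1 (UNC ψ) (a, y, t) ^ 2 + pdv ee2 (UNC ψ) (a, y, t) ^ 2)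
        + (pdv ee1 (UNC φ1) (a, y, t) + pdv ee2 (UNC φ2) (a, y, t))) :=
      funext fun a => eqc3 a y t ht
    rw [hfe] at hL3
    exact hL3.unique hR3
  norm_num at d1eq3
  have hL4 : HasDerivAt (fun b => pdv ee3 (UNC ψ) (x - s * t, b, t) - s * pdv ee1 (UNC ψ) (x - s * t, b, t)
        - ε * (pdv ee1 (pdv ee1 (UNC ψ)) (x - s * t, b, t) + pdv ee2 (pdv ee2 (UNC ψ)) (x - s * t, b, t)))
      (pdv ee2 (pdv ee3 (UNC ψ)) (x - s * t, y, t) - s * pdv ee2 (pdv ee1 (UNC ψ)) (x - s * t, y, t) - ε * (pdv ee2 (pdv ee1 (pdv ee1 (UNC ψ))) (x - s * t, y, t) + pdv ee2 (pdv ee2 (pdv ee2 (UNC ψ))) (x - s * t, y, t))) y :=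
    ((hasDerivAt_y ((hG.pdv ee3).diffAt' (x - s * t) y ht)).sub (HasDerivAt.const_mul s (hasDerivAt_y ((hG.pdv ee1).diffAt' (x - s * t) y ht)))).sub
      (HasDerivAt.const_mul ε ((hasDerivAt_y (((hG.pdv ee1).pdv ee1).diffAt' (x - s * t) y ht)).add (hasDerivAt_y (((hG.pdv ee2).pdv ee2).diffAt' (x - s * t) y ht))))
  have hR4 : HasDerivAt (fun b => -(2 * ε) * (P (x - s * t) * pdv ee1 (UNC ψ) (x - s * t, b, t))
        - ε * (pdv ee1 (UNC ψ) (x - s * t, b, t) ^ 2 + pdv ee2 (UNC ψ) (x - s * t, b, t) ^ 2)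
        + (pdv ee1 (UNC φ1) (x - s * t, b, t) + pdv ee2 (UNC φ2) (x - s * t, b, t)))
      (-(2 * ε) * (P (x - s * t) * pdv ee2 (pdv ee1 (UNC ψ)) (x - s * t, y, t))
        - ε * ((2 : ℕ) * pdv ee1 (UNC ψ) (x - s * t, y, t) ^ (2 - 1) * pdv ee2 (pdv ee1 (UNC ψ)) (x - s * t, y, t) + (2 : ℕ) * pdv ee2 (UNC ψ) (x - s * t, y, t) ^ (2 - 1) * pdv ee2 (pdv ee2 (UNC ψ)) (x - s * t, y, t))
        + (pdv ee2 (pdv ee1 (UNC φ1)) (x - s * t, y, t) + pdv ee2 (pdv ee2 (UNC φ2)) (x - s * t, y, t))) y :=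
    ((HasDerivAt.const_mul (-(2 * ε)) (HasDerivAt.const_mul (P (x - s * t)) (hasDerivAt_y ((hG.pdv ee1).diffAt' (x - s * t) y ht)))).sub
      (HasDerivAt.const_mul ε (((hasDerivAt_y ((hG.pdv ee1).diffAt' (x - s * t) y ht)).pow 2).add ((hasDerivAt_y ((hG.pdv ee2).diffAt' (x - s * t) y ht)).pow 2)))).add
      ((hasDerivAt_y ((hF1.pdv ee1).diffAt' (x - s * t) y ht)).add (hasDerivAt_y ((hF2.pdv ee2).diffAt' (x - s * t) y ht)))
  have d2eq3 : pdv ee2 (pdv ee3 (UNC ψ)) (x - s * t, y, t) - s * pdv ee2 (pdv ee1 (UNC ψ)) (x - s * t, y, t) - ε * (pdv ee2 (pdv ee1 (pdv ee1 (UNC ψ))) (x - s * t, y, t) + pdv ee2 (pdv ee2 (pdv ee2 (UNC ψ))) (x - s * t, y, t))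
      = -(2 * ε) * (P (x - s * t) * pdv ee2 (pdv ee1 (UNC ψ)) (x - s * t, y, t))
        - ε * ((2 : ℕ) * pdv ee1 (UNC ψ) (x - s * t, y, t) ^ (2 - 1) * pdv ee2 (pdv ee1 (UNC ψ)) (x - s * t, y, t) + (2 : ℕ) * pdv ee2 (UNC ψ) (x - s * t, y, t) ^ (2 - 1) * pdv ee2 (pdv ee2 (UNC ψ)) (x - s * t, y, t))
        + (pdv ee2 (pdv ee1 (UNC φ1)) (x - s * t, y, t) + pdv ee2 (pdv ee2 (UNC φ2)) (x - s * t, y, t)) := by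
    have hfe : (fun b => pdv ee3 (UNC ψ) (x - s * t, b, t) - s * pdv ee1 (UNC ψ) (x - s * t, b, t)
        - ε * (pdv ee1 (pdv ee1 (UNC ψ)) (x - s * t, b, t) + pdv ee2 (pdv ee2 (UNC ψ)) (x - s * t, b, t)))
        = (fun b => -(2 * ε) * (P (x - s * t) * pdv ee1 (UNC ψ) (x - s * t, b, t))
        - ε * (pdv ee1 (UNC ψ) (x - s * t, b, t) ^ 2 + pdv ee2 (UNC ψ) (x - s * t, b, t) ^ 2)
        + (pdv ee1 (UNC φ1) (x - s * t, b, t) + pdv ee2 (UNC φ2) (x - s * t, b, t))) :=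
      funext fun b => eqc3 (x - s * t) b t ht
    rw [hfe] at hL4
    exact hL4.unique hR4
  norm_num at d2eq3
  have s1 : pdv ee3 (pdv ee1 (UNC φ1)) (x - s * t, y, t) = pdv ee1 (pdv ee3 (UNC φ1)) (x - s * t, y, t) := pdv_comm' hF1 (x - s * t) y ht ee3 ee1
  have s2 : pdv ee3 (pdv ee2 (UNC φ2)) (x - s * t, y, t) = pdv ee2 (pdv ee3 (UNC φ2)) (x - s * t, y, t) := pdv_comm' hF2 (x - s * t) y ht ee3 ee2
  have s3 : pdv ee1 (pdv ee2 (UNC φ2)) (x - s * t, y, t) = pdv ee2 (pdv ee1 (UNC φ2)) (x - s * t, y, t) := pdv_comm' hF2 (x - s * t) y ht ee1 ee2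
  have s4 : pdv ee1 (pdv ee1 (pdv ee2 (UNC φ2))) (x - s * t, y, t) = pdv ee2 (pdv ee1 (pdv ee1 (UNC φ2))) (x - s * t, y, t) := swap112' hF2 (x - s * t) y ht
  have s5 : pdv ee2 (pdv ee2 (pdv ee1 (UNC φ1))) (x - s * t, y, t) = pdv ee1 (pdv ee2 (pdv ee2 (UNC φ1))) (x - s * t, y, t) := (swap122' hF1 (x - s * t) y ht).symm
  have sA : pdv ee3 (pdv ee1 (UNC ψ)) (x - s * t, y, t) = pdv ee1 (pdv ee3 (UNC ψ)) (x - s * t, y, t) := pdv_comm' hG (x - s * t) y ht ee3 ee1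
  have sB : pdv ee2 (pdv ee2 (pdv ee1 (UNC ψ))) (x - s * t, y, t) = pdv ee1 (pdv ee2 (pdv ee2 (UNC ψ))) (x - s * t, y, t) := (swap122' hG (x - s * t) y ht).symm
  have sC : pdv ee2 (pdv ee1 (UNC ψ)) (x - s * t, y, t) = pdv ee1 (pdv ee2 (UNC ψ)) (x - s * t, y, t) := pdv_comm' hG (x - s * t) y ht ee2 ee1
  have sD : pdv ee3 (pdv ee2 (UNC ψ)) (x - s * t, y, t) = pdv ee2 (pdv ee3 (UNC ψ)) (x - s * t, y, t) := pdv_comm' hG (x - s * t) y ht ee3 ee2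
  have sE : pdv ee1 (pdv ee1 (pdv ee2 (UNC ψ))) (x - s * t, y, t) = pdv ee2 (pdv ee1 (pdv ee1 (UNC ψ))) (x - s * t, y, t) := swap112' hG (x - s * t) y ht
  refine ⟨?_, ?_, ?_⟩
  · show DT n x y t - (DZ (DZ n) x y t + DY (DY n) x y t)
        = DZ (fun a b c => n a b c * p1 a b c) x y t + DY (fun a b c => n a b c * p2 a b c) x y t
    rw [hnT, hnZZ, hnYY, hprodZ, hprodY, n0, p10, p20]
    linear_combination d1eq1 + d2eq2 + hodeNz + s1 + s2 - s * s3 - s4 - s5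
  · show DT p1 x y t - ε * (DZ (DZ p1) x y t + DY (DY p1) x y t)
        = -(2 * ε) * (p1 x y t * DZ p1 x y t + p2 x y t * DY p1 x y t) + DZ n x y t
    rw [hp1T, hp1ZZ, hp1YY, hp1Z, hp1Y, hnZ, p10, p20]
    linear_combination d1eq3 + hodePz + sA - ε * sB + (2 * ε * (pdv ee2 (UNC ψ) (x - s * t, y, t))) * sC
  · show DT p2 x y t - ε * (DZ (DZ p2) x y t + DY (DY p2) x y t)
        = -(2 * ε) * (p1 x y t * DZ p2 x y t + p2 x y t * DY p2 x y t) + DY n x y t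
    rw [hp2T, hp2ZZ, hp2YY, hp2Z, hp2Y, hnY, p10, p20]
    linear_combination d2eq3 + sD - ε * sE + (s - 2 * ε * (P (x - s * t) + pdv ee1 (UNC ψ) (x - s * t, y, t))) * sC


end KSWave
end
end
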